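/- arXiv:1602.00733 — 4 statements merged into one kernel-verified Lean document; each statement's English description precedes it below -/
import Mathlib

section
/- For all integers p, p', q, q' ≥ 3, there is a contraction model of W_{p,q} in W_{p',q'} if and only if p = p' and q = q'. In particular, {W_{p,q} : p, q ≥ 3} is an infinite antichain of the contraction relation. -/
open SimpleGraph

/-- A contraction model of a graph `H` in a graph `G`: a map sending each vertex of `H`
to a connected subset of vertices of `G`, these subsets partitioning the vertices of `G`,
with distinct vertices of `H` adjacent iff the corresponding subsets are joined by an
edge of `G`. -/
def IsContractionModel {V W : Type*} (G : SimpleGraph V) (H : SimpleGraph W)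
    (φ : W → Set V) : Prop :=
  (∀ w : W, (G.induce (φ w)).Connected) ∧
  (∀ v : V, ∃! w : W, v ∈ φ w) ∧
  ∀ w w' : W, w ≠ w' →
    (H.Adj w w' ↔ ∃ a ∈ φ w, ∃ b ∈ φ w', G.Adj a b)

/-- `H` is a contraction of `G`: there is a contraction model of `H` in `G`
(equivalently, `H` can be obtained from `G` by a sequence of edge contractions). -/
def IsContraction {V W : Type*} (H : SimpleGraph W) (G : SimpleGraph V) : Prop :=
  ∃ φ : W → Set V, IsContractionModel G H φ

/-- The graph `D_r`: two adjacent vertices together with `r` further vertices,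
each adjacent to exactly the first two. `D_2` is the diamond (`K₄` minus an edge). -/
def Dgraph (r : ℕ) : SimpleGraph (Fin 2 ⊕ Fin r) :=
  SimpleGraph.fromRel (fun x _ => x.isLeft)

/-- Finite graphs, with vertex set `Fin n` for some `n`. -/
def FinGraph : Type := Σ n : ℕ, SimpleGraph (Fin n)

/-- The contraction relation on finite graphs. -/
def FinGraph.Contr (H G : FinGraph) : Prop := IsContraction H.2 G.2

/-- A set of finite graphs is well-quasi-ordered by the contraction relation if every
infinite sequence of its members contains two graphs, the earlier being a contraction
of the later. -/
def WqoByContraction (S : Set FinGraph) : Prop :=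
  ∀ f : ℕ → FinGraph, (∀ k, f k ∈ S) → ∃ i j : ℕ, i < j ∧ FinGraph.Contr (f i) (f j)

/-- The graph `W_{p,q}`: the disjoint union of `p` isolated vertices (`Sum.inr ∘ Sum.inl`)
and the complete bipartite graph `K_{2,q}` (`Sum.inr ∘ Sum.inr`), together with two
non-adjacent poles (`Sum.inl`) adjacent to all the other `p + q + 2` vertices. -/
def Wgraph (p q : ℕ) : SimpleGraph (Fin 2 ⊕ (Fin p ⊕ (Fin 2 ⊕ Fin q))) :=
  SimpleGraph.fromRel (fun x y =>
    (x.isLeft ∧ y.isRight) ∨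
    (∃ (s : Fin 2) (t : Fin q),
      x = Sum.inr (Sum.inr (Sum.inl s)) ∧ y = Sum.inr (Sum.inr (Sum.inr t))))


set_option linter.unusedVariables false

namespace WAux

abbrev WV (p q : ℕ) := Fin 2 ⊕ (Fin p ⊕ (Fin 2 ⊕ Fin q))

variable {p q : ℕ}

lemma fin2 (i j : Fin 2) (h : i ≠ j) (k : Fin 2) : k = i ∨ k = j := by
  revert h; revert i j k; decide

lemma pole_not_adj_pole (i j : Fin 2) : ¬ (Wgraph p q).Adj (.inl i) (.inl j) := by
  simp [Wgraph, fromRel_adj]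

lemma pole_adj (i : Fin 2) (z : Fin p ⊕ (Fin 2 ⊕ Fin q)) :
    (Wgraph p q).Adj (.inl i) (.inr z) := by
  simp [Wgraph, fromRel_adj]

lemma iso_adj (c : Fin p) (y : WV p q) :
    (Wgraph p q).Adj (.inr (.inl c)) y ↔ ∃ i : Fin 2, y = .inl i := by
  cases y with
  | inl i => simp [Wgraph, fromRel_adj]
  | inr z => simp [Wgraph, fromRel_adj]

lemma semi_adj (k : Fin 2) (y : WV p q) :
    (Wgraph p q).Adj (.inr (.inr (.inl k))) y ↔
      (∃ i : Fin 2, y = .inl i) ∨ (∃ t : Fin q, y = .inr (.inr (.inr t))) := by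
  cases y with
  | inl i => simp [Wgraph, fromRel_adj]
  | inr z => cases z with
    | inl c => simp [Wgraph, fromRel_adj]
    | inr z => cases z with
      | inl k' => simp [Wgraph, fromRel_adj]
      | inr t => simp [Wgraph, fromRel_adj]; exact fin2 0 1 (by decide) k

lemma leaf_adj (t : Fin q) (y : WV p q) :
    (Wgraph p q).Adj (.inr (.inr (.inr t))) y ↔
      (∃ i : Fin 2, y = .inl i) ∨ (∃ k : Fin 2, y = .inr (.inr (.inl k))) := by
  cases y with
  | inl i => simp [Wgraph, fromRel_adj]
  | inr z => cases z with
    | inl c => simp [Wgraph, fromRel_adj]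
    | inr z => cases z with
      | inl k' => simp [Wgraph, fromRel_adj]; exact fin2 0 1 (by decide) k'
      | inr t' => simp [Wgraph, fromRel_adj]

lemma singleton_of_isolated {V : Type*} {G : SimpleGraph V} {s : Set V}
    (h : (G.induce s).Connected) {c : V} (hc : c ∈ s)
    (hiso : ∀ y ∈ s, ¬ G.Adj c y) : s = {c} := by
  apply Set.eq_singleton_iff_unique_mem.mpr
  refine ⟨hc, fun v hv => ?_⟩
  obtain ⟨w⟩ := h.preconnected ⟨c, hc⟩ ⟨v, hv⟩
  cases w with
  | nil => rfl
  | cons hadj w' =>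
    exact absurd (by exact hadj) (by intro hh; exact hiso _ (Subtype.mem _) hh)

lemma mem_unique {V W : Type*} {G : SimpleGraph V} {H : SimpleGraph W} {φ : W → Set V}
    (hm : IsContractionModel G H φ) {v : V} {w w' : W}
    (h : v ∈ φ w) (h' : v ∈ φ w') : w = w' := by
  obtain ⟨x, _, hu⟩ := hm.2.1 v
  rw [hu w h, hu w' h']

lemma adj_of {V W : Type*} {G : SimpleGraph V} {H : SimpleGraph W} {φ : W → Set V}
    (hm : IsContractionModel G H φ) {w w' : W} (hne : w ≠ w') {a b : V}
    (ha : a ∈ φ w) (hb : b ∈ φ w') (hab : G.Adj a b) : H.Adj w w' :=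
  (hm.2.2 w w' hne).mpr ⟨a, ha, b, hb, hab⟩

lemma pigeon5 {α : Type*} {z1 z2 z3 z4 z5 w1 w2 w3 w4 : α}
    (h12 : z1 ≠ z2) (h13 : z1 ≠ z3) (h14 : z1 ≠ z4) (h15 : z1 ≠ z5)
    (h23 : z2 ≠ z3) (h24 : z2 ≠ z4) (h25 : z2 ≠ z5)
    (h34 : z3 ≠ z4) (h35 : z3 ≠ z5) (h45 : z4 ≠ z5)
    (m1 : z1 = w1 ∨ z1 = w2 ∨ z1 = w3 ∨ z1 = w4)
    (m2 : z2 = w1 ∨ z2 = w2 ∨ z2 = w3 ∨ z2 = w4)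
    (m3 : z3 = w1 ∨ z3 = w2 ∨ z3 = w3 ∨ z3 = w4)
    (m4 : z4 = w1 ∨ z4 = w2 ∨ z4 = w3 ∨ z4 = w4)
    (m5 : z5 = w1 ∨ z5 = w2 ∨ z5 = w3 ∨ z5 = w4) : False := by
  classical
  have hsub : ({z1, z2, z3, z4, z5} : Finset α) ⊆ {w1, w2, w3, w4} := by
    intro x hx
    simp only [Finset.mem_insert, Finset.mem_singleton] at hx ⊢
    rcases hx with rfl | rfl | rfl | rfl | rfl <;> tauto
  have h5 : ({z1, z2, z3, z4, z5} : Finset α).card = 5 := by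
    rw [Finset.card_insert_of_notMem (by simp [h12, h13, h14, h15]),
        Finset.card_insert_of_notMem (by simp [h23, h24, h25]),
        Finset.card_insert_of_notMem (by simp [h34, h35]),
        Finset.card_insert_of_notMem (by simp [h45]), Finset.card_singleton]
  have h4 : ({w1, w2, w3, w4} : Finset α).card ≤ 4 := by
    calc ({w1, w2, w3, w4} : Finset α).card
        ≤ ({w2, w3, w4} : Finset α).card + 1 := Finset.card_insert_le _ _
      _ ≤ (({w3, w4} : Finset α).card + 1) + 1 :=
          Nat.add_le_add_right (Finset.card_insert_le _ _) 1
      _ ≤ ((({w4} : Finset α).card + 1) + 1) + 1 :=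
          Nat.add_le_add_right (Nat.add_le_add_right (Finset.card_insert_le _ _) 1) 1
      _ ≤ 4 := by simp
  have := Finset.card_le_card hsub
  omega

end WAux

namespace WAux

lemma semiSingle {p q p' q' : ℕ} (hq : 3 ≤ q)
    {φ : WV p q → Set (WV p' q')}
    (hm : IsContractionModel (Wgraph p' q') (Wgraph p q) φ)
    {m n r s : Fin 2} (hmn : m ≠ n) (hrs : r ≠ s)
    (hnoinl : ∀ (z : Fin p ⊕ (Fin 2 ⊕ Fin q)) (i : Fin 2),
      (Sum.inl i : WV p' q') ∉ φ (Sum.inr z))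
    (hnoiso : ∀ (z : Fin 2 ⊕ Fin q) (c : Fin p'),
      (Sum.inr (Sum.inl c) : WV p' q') ∉ φ (Sum.inr (Sum.inr z)))
    (hu : (Sum.inr (Sum.inr (Sum.inl r)) : WV p' q') ∈ φ (Sum.inr (Sum.inr (Sum.inl m))))
    (hv : (Sum.inr (Sum.inr (Sum.inl s)) : WV p' q') ∈ φ (Sum.inr (Sum.inr (Sum.inl n)))) :
    φ (Sum.inr (Sum.inr (Sum.inl m))) = {Sum.inr (Sum.inr (Sum.inl r))} := by
  apply Set.eq_singleton_iff_unique_mem.mpr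
  refine ⟨hu, fun v hv' => ?_⟩
  rcases v with i | c | k | t
  · exact absurd hv' (hnoinl _ i)
  · exact absurd hv' (hnoiso _ c)
  · rcases fin2 r s hrs k with rfl | rfl
    · rfl
    · exact absurd (mem_unique hm hv' hv) (by simp [hmn])
  · have hadj : (Wgraph p q).Adj (Sum.inr (Sum.inr (Sum.inl m))) (Sum.inr (Sum.inr (Sum.inl n))) :=
      adj_of hm (by simp [hmn]) hv' hv (by rw [leaf_adj]; exact Or.inr ⟨s, rfl⟩)
    rw [semi_adj] at hadj
    rcases hadj with ⟨i, h⟩ | ⟨t', h⟩ <;> simp at h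

lemma caseB2 {p q p' q' : ℕ} (hq : 3 ≤ q)
    {φ : WV p q → Set (WV p' q')}
    (hm : IsContractionModel (Wgraph p' q') (Wgraph p q) φ)
    {m n r s : Fin 2} (hmn : m ≠ n) (hrs : r ≠ s)
    (hpole : ∀ (k : Fin 2) (v : WV p' q'), v ∈ φ (Sum.inl k) → ∃ i : Fin 2, v = Sum.inl i)
    (hnoinl : ∀ (z : Fin p ⊕ (Fin 2 ⊕ Fin q)) (i : Fin 2),
      (Sum.inl i : WV p' q') ∉ φ (Sum.inr z))
    (hnoiso : ∀ (z : Fin 2 ⊕ Fin q) (c : Fin p'),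
      (Sum.inr (Sum.inl c) : WV p' q') ∉ φ (Sum.inr (Sum.inr z)))
    (hu : (Sum.inr (Sum.inr (Sum.inl r)) : WV p' q') ∈ φ (Sum.inr (Sum.inr (Sum.inl m))))
    (hv : (Sum.inr (Sum.inr (Sum.inl s)) : WV p' q') ∈ φ (Sum.inr (Sum.inr (Sum.inl n)))) :
    p = p' ∧ q = q' := by
  classical
  have hsm : φ (Sum.inr (Sum.inr (Sum.inl m))) = {Sum.inr (Sum.inr (Sum.inl r))} :=
    semiSingle hq hm hmn hrs hnoinl hnoiso hu hv
  have hsn : φ (Sum.inr (Sum.inr (Sum.inl n))) = {Sum.inr (Sum.inr (Sum.inl s))} :=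
    semiSingle hq hm hmn.symm hrs.symm hnoinl hnoiso hv hu
  have hleaf : ∀ t : Fin q, ∃ d : Fin q',
      φ (Sum.inr (Sum.inr (Sum.inr t))) = {Sum.inr (Sum.inr (Sum.inr d))} := by
    intro t
    have hcls : ∀ v ∈ φ (Sum.inr (Sum.inr (Sum.inr t))),
        ∃ d : Fin q', v = Sum.inr (Sum.inr (Sum.inr d)) := by
      intro v hv'
      rcases v with i | c | k | d
      · exact absurd hv' (hnoinl _ i)
      · exact absurd hv' (hnoiso _ c)
      · rcases fin2 r s hrs k with rfl | rfl
        · exact absurd (mem_unique hm hv' hu) (by simp)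
        · exact absurd (mem_unique hm hv' hv) (by simp)
      · exact ⟨d, rfl⟩
    obtain ⟨⟨v0, hv0⟩⟩ := (hm.1 (Sum.inr (Sum.inr (Sum.inr t)))).nonempty
    obtain ⟨d, rfl⟩ := hcls v0 hv0
    refine ⟨d, singleton_of_isolated (hm.1 _) hv0 ?_⟩
    intro y hy hadj
    obtain ⟨d', rfl⟩ := hcls y hy
    rw [leaf_adj] at hadj
    rcases hadj with ⟨i, h⟩ | ⟨k, h⟩ <;> simp at h
  have hiso : ∀ c : Fin p, ∃ d : Fin p',
      φ (Sum.inr (Sum.inl c)) = {Sum.inr (Sum.inl d)} := by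
    intro c
    have hcls : ∀ v ∈ φ (Sum.inr (Sum.inl c)),
        ∃ d : Fin p', v = Sum.inr (Sum.inl d) := by
      intro v hv'
      rcases v with i | d | k | e
      · exact absurd hv' (hnoinl _ i)
      · exact ⟨d, rfl⟩
      · rcases fin2 r s hrs k with rfl | rfl
        · exact absurd (mem_unique hm hv' hu) (by simp)
        · exact absurd (mem_unique hm hv' hv) (by simp)
      · have hadj : (Wgraph p q).Adj (Sum.inr (Sum.inl c)) (Sum.inr (Sum.inr (Sum.inl m))) :=
          adj_of hm (by simp) hv' hu (by rw [leaf_adj]; exact Or.inr ⟨r, rfl⟩)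
        rw [iso_adj] at hadj
        obtain ⟨i, h⟩ := hadj
        simp at h
    obtain ⟨⟨v0, hv0⟩⟩ := (hm.1 (Sum.inr (Sum.inl c))).nonempty
    obtain ⟨d, rfl⟩ := hcls v0 hv0
    refine ⟨d, singleton_of_isolated (hm.1 _) hv0 ?_⟩
    intro y hy hadj
    rw [iso_adj] at hadj
    obtain ⟨i, rfl⟩ := hadj
    exact hnoinl _ i hy
  choose fI hfI using hiso
  choose fL hfL using hleaf
  constructor
  · have hbij : Function.Bijective fI := by
      constructor
      · intro a b hab
        have ha' : (Sum.inr (Sum.inl (fI a)) : WV p' q') ∈ φ (Sum.inr (Sum.inl a)) := by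
          rw [hfI a]; exact rfl
        have hb' : (Sum.inr (Sum.inl (fI a)) : WV p' q') ∈ φ (Sum.inr (Sum.inl b)) := by
          rw [hfI b, ← hab]; exact rfl
        have := mem_unique hm ha' hb'
        simpa using this
      · intro d
        obtain ⟨w, hw, -⟩ := hm.2.1 (Sum.inr (Sum.inl d) : WV p' q')
        rcases w with i | c | k | t
        · obtain ⟨i', h⟩ := hpole i _ hw
          simp at h
        · refine ⟨c, ?_⟩
          rw [hfI c, Set.mem_singleton_iff] at hw
          simpa using hw.symm
        · rcases fin2 m n hmn k with rfl | rfl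
          · rw [hsm] at hw; simp at hw
          · rw [hsn] at hw; simp at hw
        · rw [hfL t] at hw; simp at hw
    have := Fintype.card_of_bijective hbij
    simpa using this
  · have hbij : Function.Bijective fL := by
      constructor
      · intro a b hab
        have ha' : (Sum.inr (Sum.inr (Sum.inr (fL a))) : WV p' q') ∈ φ (Sum.inr (Sum.inr (Sum.inr a))) := by
          rw [hfL a]; exact rfl
        have hb' : (Sum.inr (Sum.inr (Sum.inr (fL a))) : WV p' q') ∈ φ (Sum.inr (Sum.inr (Sum.inr b))) := by
          rw [hfL b, ← hab]; exact rfl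
        have := mem_unique hm ha' hb'
        simpa using this
      · intro d
        obtain ⟨w, hw, -⟩ := hm.2.1 (Sum.inr (Sum.inr (Sum.inr d)) : WV p' q')
        rcases w with i | c | k | t
        · obtain ⟨i', h⟩ := hpole i _ hw
          simp at h
        · rw [hfI c] at hw; simp at hw
        · rcases fin2 m n hmn k with rfl | rfl
          · rw [hsm] at hw; simp at hw
          · rw [hsn] at hw; simp at hw
        · refine ⟨t, ?_⟩
          rw [hfL t, Set.mem_singleton_iff] at hw
          simpa using hw.symm
    have := Fintype.card_of_bijective hbij
    simpa using this

end WAux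

namespace WAux

lemma poleSingle {p q p' q' : ℕ}
    {φ : WV p q → Set (WV p' q')}
    (hm : IsContractionModel (Wgraph p' q') (Wgraph p q) φ)
    {i j k l : Fin 2} (hij : i ≠ j) (hkl : k ≠ l)
    (ha : (Sum.inl i : WV p' q') ∈ φ (Sum.inl k))
    (hb : (Sum.inl j : WV p' q') ∈ φ (Sum.inl l)) :
    φ (Sum.inl k) = {Sum.inl i} := by
  apply Set.eq_singleton_iff_unique_mem.mpr
  refine ⟨ha, fun v hv' => ?_⟩
  by_contra hne
  have hvj : v ≠ Sum.inl j := by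
    rintro rfl
    exact absurd (mem_unique hm hv' hb) (by simp [hkl])
  have hz : ∃ z, v = Sum.inr z := by
    rcases v with i' | z
    · rcases fin2 i j hij i' with rfl | rfl
      · exact absurd rfl hne
      · exact absurd rfl hvj
    · exact ⟨z, rfl⟩
  obtain ⟨z, rfl⟩ := hz
  have hadj := adj_of hm (show (Sum.inl k : WV p q) ≠ Sum.inl l by simp [hkl]) hv' hb
      ((pole_adj j z).symm)
  exact pole_not_adj_pole _ _ hadj

lemma caseB {p q p' q' : ℕ} (hp : 3 ≤ p) (hq : 3 ≤ q)
    {φ : WV p q → Set (WV p' q')}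
    (hm : IsContractionModel (Wgraph p' q') (Wgraph p q) φ)
    {i j k l : Fin 2} (hij : i ≠ j) (hkl : k ≠ l)
    (ha : (Sum.inl i : WV p' q') ∈ φ (Sum.inl k))
    (hb : (Sum.inl j : WV p' q') ∈ φ (Sum.inl l)) :
    p = p' ∧ q = q' := by
  have hx := poleSingle hm hij hkl ha hb
  have hy := poleSingle hm hij.symm hkl.symm hb ha
  have hpole : ∀ (k' : Fin 2) (v : WV p' q'), v ∈ φ (Sum.inl k') → ∃ i' : Fin 2, v = Sum.inl i' := by
    intro k' v hv'
    rcases fin2 k l hkl k' with rfl | rfl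
    · rw [hx, Set.mem_singleton_iff] at hv'; exact ⟨i, hv'⟩
    · rw [hy, Set.mem_singleton_iff] at hv'; exact ⟨j, hv'⟩
  have hnoinl : ∀ (z : Fin p ⊕ (Fin 2 ⊕ Fin q)) (i' : Fin 2),
      (Sum.inl i' : WV p' q') ∉ φ (Sum.inr z) := by
    intro z i' hmem
    rcases fin2 i j hij i' with rfl | rfl
    · exact absurd (mem_unique hm hmem ha) (by simp)
    · exact absurd (mem_unique hm hmem hb) (by simp)
  have hnoiso : ∀ (z : Fin 2 ⊕ Fin q) (c : Fin p'),
      (Sum.inr (Sum.inl c) : WV p' q') ∉ φ (Sum.inr (Sum.inr z)) := by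
    intro z c hmem
    have hsing : φ (Sum.inr (Sum.inr z)) = {Sum.inr (Sum.inl c)} := by
      refine singleton_of_isolated (hm.1 _) hmem ?_
      intro y hy' hadj
      rw [iso_adj] at hadj
      obtain ⟨i', rfl⟩ := hadj
      exact hnoinl _ i' hy'
    rcases z with m0 | t0
    · have hadjH : (Wgraph p q).Adj (Sum.inr (Sum.inr (Sum.inl m0)))
          (Sum.inr (Sum.inr (Sum.inr ⟨0, by omega⟩))) := by
        rw [semi_adj]; exact Or.inr ⟨_, rfl⟩
      obtain ⟨a', ha', b', hb', hab⟩ := (hm.2.2 _ _ (by simp)).mp hadjH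
      rw [hsing, Set.mem_singleton_iff] at ha'
      subst ha'
      rw [iso_adj] at hab
      obtain ⟨i', rfl⟩ := hab
      exact hnoinl _ i' hb'
    · have hadjH : (Wgraph p q).Adj (Sum.inr (Sum.inr (Sum.inr t0)))
          (Sum.inr (Sum.inr (Sum.inl 0))) := by
        rw [leaf_adj]; exact Or.inr ⟨_, rfl⟩
      obtain ⟨a', ha', b', hb', hab⟩ := (hm.2.2 _ _ (by simp)).mp hadjH
      rw [hsing, Set.mem_singleton_iff] at ha'
      subst ha'
      rw [iso_adj] at hab
      obtain ⟨i', rfl⟩ := hab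
      exact hnoinl _ i' hb'
  obtain ⟨wu, hwu, -⟩ := hm.2.1 (Sum.inr (Sum.inr (Sum.inl 0)) : WV p' q')
  obtain ⟨wv, hwv, -⟩ := hm.2.1 (Sum.inr (Sum.inr (Sum.inl 1)) : WV p' q')
  have hex : ∃ t : Fin q, wu ≠ Sum.inr (Sum.inr (Sum.inr t)) ∧
      wv ≠ Sum.inr (Sum.inr (Sum.inr t)) := by
    by_contra hcon
    push_neg at hcon
    have h0 := or_iff_not_imp_left.mpr (hcon ⟨0, by omega⟩)
    have h1 := or_iff_not_imp_left.mpr (hcon ⟨1, by omega⟩)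
    have h2 := or_iff_not_imp_left.mpr (hcon ⟨2, by omega⟩)
    rcases h0 with e0 | e0 <;> rcases h1 with e1 | e1 <;> rcases h2 with e2 | e2 <;>
      first
        | exact absurd (e0.symm.trans e1) (by simp)
        | exact absurd (e0.symm.trans e2) (by simp)
        | exact absurd (e1.symm.trans e2) (by simp)
  obtain ⟨t, htu, htv⟩ := hex
  have hclsL : ∀ v ∈ φ (Sum.inr (Sum.inr (Sum.inr t))),
      ∃ d : Fin q', v = Sum.inr (Sum.inr (Sum.inr d)) := by
    intro v hv'
    rcases v with i' | c | k' | d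
    · exact absurd hv' (hnoinl _ i')
    · exact absurd hv' (hnoiso _ c)
    · rcases fin2 0 1 (by decide) k' with rfl | rfl
      · exact absurd (mem_unique hm hv' hwu).symm htu
      · exact absurd (mem_unique hm hv' hwv).symm htv
    · exact ⟨d, rfl⟩
  obtain ⟨⟨v0, hv0⟩⟩ := (hm.1 (Sum.inr (Sum.inr (Sum.inr t)))).nonempty
  obtain ⟨d, rfl⟩ := hclsL v0 hv0
  have hlt : φ (Sum.inr (Sum.inr (Sum.inr t))) = {Sum.inr (Sum.inr (Sum.inr d))} := by
    refine singleton_of_isolated (hm.1 _) hv0 ?_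
    intro y hy' hadj
    obtain ⟨d', rfl⟩ := hclsL y hy'
    rw [leaf_adj] at hadj
    rcases hadj with ⟨i', h⟩ | ⟨k', h⟩ <;> simp at h
  have hgetsemi : ∀ m0 : Fin 2, ∃ r0 : Fin 2,
      (Sum.inr (Sum.inr (Sum.inl r0)) : WV p' q') ∈ φ (Sum.inr (Sum.inr (Sum.inl m0))) := by
    intro m0
    have hadjH : (Wgraph p q).Adj (Sum.inr (Sum.inr (Sum.inr t)))
        (Sum.inr (Sum.inr (Sum.inl m0))) := by
      rw [leaf_adj]; exact Or.inr ⟨m0, rfl⟩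
    obtain ⟨a', ha', b', hb', hab⟩ := (hm.2.2 _ _ (by simp)).mp hadjH
    rw [hlt, Set.mem_singleton_iff] at ha'
    subst ha'
    rw [leaf_adj] at hab
    rcases hab with ⟨i', rfl⟩ | ⟨k', rfl⟩
    · exact absurd hb' (hnoinl _ i')
    · exact ⟨k', hb'⟩
  obtain ⟨r0, hr0⟩ := hgetsemi 0
  obtain ⟨r1, hr1⟩ := hgetsemi 1
  have hr01 : r0 ≠ r1 := by
    rintro rfl
    exact absurd (mem_unique hm hr0 hr1) (by simp)
  exact caseB2 hq hm (show (0 : Fin 2) ≠ 1 by decide) hr01 hpole hnoinl hnoiso hr0 hr1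

end WAux

namespace WAux

lemma forward {p q p' q' : ℕ} (hp : 3 ≤ p) (hq : 3 ≤ q)
    (h : IsContraction (Wgraph p q) (Wgraph p' q')) : p = p' ∧ q = q' := by
  classical
  obtain ⟨φ, hm⟩ := h
  by_cases hA : ∀ c : Fin p', ∃ (i : Fin 2) (w : WV p q),
      (Sum.inr (Sum.inl c) : WV p' q') ∈ φ w ∧ (Sum.inl i : WV p' q') ∈ φ w
  · exfalso
    obtain ⟨wa, hwa, -⟩ := hm.2.1 (Sum.inl 0 : WV p' q')
    obtain ⟨wb, hwb, -⟩ := hm.2.1 (Sum.inl 1 : WV p' q')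
    obtain ⟨wu, hwu, -⟩ := hm.2.1 (Sum.inr (Sum.inr (Sum.inl 0)) : WV p' q')
    obtain ⟨wv, hwv, -⟩ := hm.2.1 (Sum.inr (Sum.inr (Sum.inl 1)) : WV p' q')
    have hA1 : ∀ w : WV p q, w ≠ wa → w ≠ wb → w ≠ wu → w ≠ wv →
        ∃ d : Fin q', φ w = {Sum.inr (Sum.inr (Sum.inr d))} := by
      intro w h1 h2 h3 h4
      have hcls : ∀ v ∈ φ w, ∃ d : Fin q', v = Sum.inr (Sum.inr (Sum.inr d)) := by
        intro v hv'
        rcases v with i' | c | k' | d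
        · rcases fin2 0 1 (by decide) i' with rfl | rfl
          · exact absurd (mem_unique hm hv' hwa) h1
          · exact absurd (mem_unique hm hv' hwb) h2
        · obtain ⟨i', w', hw1, hw2⟩ := hA c
          have hww : w = w' := mem_unique hm hv' hw1
          subst hww
          rcases fin2 0 1 (by decide) i' with rfl | rfl
          · exact absurd (mem_unique hm hw2 hwa) h1
          · exact absurd (mem_unique hm hw2 hwb) h2
        · rcases fin2 0 1 (by decide) k' with rfl | rfl
          · exact absurd (mem_unique hm hv' hwu) h3
          · exact absurd (mem_unique hm hv' hwv) h4
        · exact ⟨d, rfl⟩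
      obtain ⟨⟨v0, hv0⟩⟩ := (hm.1 w).nonempty
      obtain ⟨d, rfl⟩ := hcls v0 hv0
      refine ⟨d, singleton_of_isolated (hm.1 w) hv0 ?_⟩
      intro y hy' hadj
      obtain ⟨d', rfl⟩ := hcls y hy'
      rw [leaf_adj] at hadj
      rcases hadj with ⟨i', h⟩ | ⟨k', h⟩ <;> simp at h
    have hA2a : ∀ w : WV p q, w ≠ wa → w ≠ wb → w ≠ wu → w ≠ wv →
        (Wgraph p q).Adj w wa ∧ (Wgraph p q).Adj w wb ∧
        (Wgraph p q).Adj w wu ∧ (Wgraph p q).Adj w wv := by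
      intro w h1 h2 h3 h4
      obtain ⟨d, hd⟩ := hA1 w h1 h2 h3 h4
      have hmem : (Sum.inr (Sum.inr (Sum.inr d)) : WV p' q') ∈ φ w := by
        rw [hd]; exact rfl
      exact ⟨adj_of hm h1 hmem hwa (by rw [leaf_adj]; exact Or.inl ⟨0, rfl⟩),
             adj_of hm h2 hmem hwb (by rw [leaf_adj]; exact Or.inl ⟨1, rfl⟩),
             adj_of hm h3 hmem hwu (by rw [leaf_adj]; exact Or.inr ⟨0, rfl⟩),
             adj_of hm h4 hmem hwv (by rw [leaf_adj]; exact Or.inr ⟨1, rfl⟩)⟩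
    have hA2b : ∀ w : WV p q, w ≠ wa → w ≠ wb → w ≠ wu → w ≠ wv → ∀ w',
        (Wgraph p q).Adj w w' → (w' = wa ∨ w' = wb ∨ w' = wu ∨ w' = wv) := by
      intro w h1 h2 h3 h4 w' hadj
      obtain ⟨d, hd⟩ := hA1 w h1 h2 h3 h4
      obtain ⟨a', ha', b', hb', hab⟩ := (hm.2.2 _ _ hadj.ne).mp hadj
      rw [hd, Set.mem_singleton_iff] at ha'
      subst ha'
      rw [leaf_adj] at hab
      rcases hab with ⟨i', rfl⟩ | ⟨k', rfl⟩
      · rcases fin2 0 1 (by decide) i' with rfl | rfl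
        · exact Or.inl (mem_unique hm hb' hwa)
        · exact Or.inr (Or.inl (mem_unique hm hb' hwb))
      · rcases fin2 0 1 (by decide) k' with rfl | rfl
        · exact Or.inr (Or.inr (Or.inl (mem_unique hm hb' hwu)))
        · exact Or.inr (Or.inr (Or.inr (mem_unique hm hb' hwv)))
    by_cases hsin : ∃ k0 : Fin 2, (Sum.inr (Sum.inr (Sum.inl k0)) : WV p q) ≠ wa ∧
        (Sum.inr (Sum.inr (Sum.inl k0)) : WV p q) ≠ wb ∧
        (Sum.inr (Sum.inr (Sum.inl k0)) : WV p q) ≠ wu ∧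
        (Sum.inr (Sum.inr (Sum.inl k0)) : WV p q) ≠ wv
    · obtain ⟨k0, h1, h2, h3, h4⟩ := hsin
      have hnb := hA2b _ h1 h2 h3 h4
      have z1 := hnb (Sum.inl 0) (by rw [semi_adj]; exact Or.inl ⟨0, rfl⟩)
      have z2 := hnb (Sum.inl 1) (by rw [semi_adj]; exact Or.inl ⟨1, rfl⟩)
      have z3 := hnb (Sum.inr (Sum.inr (Sum.inr ⟨0, by omega⟩)))
        (by rw [semi_adj]; exact Or.inr ⟨_, rfl⟩)
      have z4 := hnb (Sum.inr (Sum.inr (Sum.inr ⟨1, by omega⟩)))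
        (by rw [semi_adj]; exact Or.inr ⟨_, rfl⟩)
      have z5 := hnb (Sum.inr (Sum.inr (Sum.inr ⟨2, by omega⟩)))
        (by rw [semi_adj]; exact Or.inr ⟨_, rfl⟩)
      refine pigeon5 ?_ ?_ ?_ ?_ ?_ ?_ ?_ ?_ ?_ ?_ z1 z2 z3 z4 z5 <;> simp
    · push_neg at hsin
      have hs : ∀ k0 : Fin 2, (Sum.inr (Sum.inr (Sum.inl k0)) : WV p q) = wa ∨
          (Sum.inr (Sum.inr (Sum.inl k0)) : WV p q) = wb ∨
          (Sum.inr (Sum.inr (Sum.inl k0)) : WV p q) = wu ∨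
          (Sum.inr (Sum.inr (Sum.inl k0)) : WV p q) = wv := by
        intro k0
        have := hsin k0
        tauto
      by_cases hi0 : ∃ c : Fin p, (Sum.inr (Sum.inl c) : WV p q) ≠ wa ∧
          (Sum.inr (Sum.inl c) : WV p q) ≠ wb ∧
          (Sum.inr (Sum.inl c) : WV p q) ≠ wu ∧
          (Sum.inr (Sum.inl c) : WV p q) ≠ wv
      · obtain ⟨c, h1, h2, h3, h4⟩ := hi0
        have hadjall := hA2a _ h1 h2 h3 h4
        have hadjs : (Wgraph p q).Adj (Sum.inr (Sum.inl c)) (Sum.inr (Sum.inr (Sum.inl 0))) := by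
          rcases hs 0 with hh | hh | hh | hh <;> rw [hh] <;> tauto
        rw [iso_adj] at hadjs
        obtain ⟨i', h⟩ := hadjs
        simp at h
      · push_neg at hi0
        have hi : ∀ c : Fin p, (Sum.inr (Sum.inl c) : WV p q) = wa ∨
            (Sum.inr (Sum.inl c) : WV p q) = wb ∨
            (Sum.inr (Sum.inl c) : WV p q) = wu ∨
            (Sum.inr (Sum.inl c) : WV p q) = wv := by
          intro c
          have := hi0 c
          tauto
        refine pigeon5 ?_ ?_ ?_ ?_ ?_ ?_ ?_ ?_ ?_ ?_
          (hs 0) (hs 1) (hi ⟨0, by omega⟩) (hi ⟨1, by omega⟩) (hi ⟨2, by omega⟩) <;> simp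
  · push_neg at hA
    obtain ⟨c, hc⟩ := hA
    obtain ⟨w, hw, -⟩ := hm.2.1 (Sum.inr (Sum.inl c) : WV p' q')
    have hno : ∀ i' : Fin 2, (Sum.inl i' : WV p' q') ∉ φ w := fun i' h' => hc i' w hw h'
    have hsing : φ w = {Sum.inr (Sum.inl c)} := by
      refine singleton_of_isolated (hm.1 w) hw ?_
      intro y hy' hadj
      rw [iso_adj] at hadj
      obtain ⟨i', rfl⟩ := hadj
      exact hno i' hy'
    obtain ⟨X, hX, -⟩ := hm.2.1 (Sum.inl 0 : WV p' q')
    obtain ⟨Y, hY, -⟩ := hm.2.1 (Sum.inl 1 : WV p' q')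
    have hwX : w ≠ X := by rintro rfl; exact hno 0 hX
    have hwY : w ≠ Y := by rintro rfl; exact hno 1 hY
    have haX : (Wgraph p q).Adj w X := adj_of hm hwX hw hX (by rw [iso_adj]; exact ⟨0, rfl⟩)
    have haY : (Wgraph p q).Adj w Y := adj_of hm hwY hw hY (by rw [iso_adj]; exact ⟨1, rfl⟩)
    have hsub : ∀ w', (Wgraph p q).Adj w w' → w' = X ∨ w' = Y := by
      intro w' hadj
      obtain ⟨a', ha', b', hb', hab⟩ := (hm.2.2 _ _ hadj.ne).mp hadj
      rw [hsing, Set.mem_singleton_iff] at ha'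
      subst ha'
      rw [iso_adj] at hab
      obtain ⟨i', rfl⟩ := hab
      rcases fin2 0 1 (by decide) i' with rfl | rfl
      · exact Or.inl (mem_unique hm hb' hX)
      · exact Or.inr (mem_unique hm hb' hY)
    have hXY : X ≠ Y := by
      rintro rfl
      rcases w with i' | z
      · have n1 := hsub (Sum.inr (Sum.inl ⟨0, by omega⟩)) (pole_adj i' _)
        have n2 := hsub (Sum.inr (Sum.inl ⟨1, by omega⟩)) (pole_adj i' _)
        rcases n1 with e1 | e1 <;> rcases n2 with e2 | e2 <;>
          exact absurd (e1.trans e2.symm) (by simp)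
      · have n1 := hsub (Sum.inl 0) ((pole_adj 0 z).symm)
        have n2 := hsub (Sum.inl 1) ((pole_adj 1 z).symm)
        rcases n1 with e1 | e1 <;> rcases n2 with e2 | e2 <;>
          exact absurd (e1.trans e2.symm) (by simp)
    rcases w with i' | c2 | k' | t0
    · exfalso
      have n1 := hsub (Sum.inr (Sum.inl ⟨0, by omega⟩)) (pole_adj i' _)
      have n2 := hsub (Sum.inr (Sum.inl ⟨1, by omega⟩)) (pole_adj i' _)
      have n3 := hsub (Sum.inr (Sum.inl ⟨2, by omega⟩)) (pole_adj i' _)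
      rcases n1 with e1 | e1 <;> rcases n2 with e2 | e2 <;> rcases n3 with e3 | e3 <;>
        first
          | exact absurd (e1.trans e2.symm) (by simp)
          | exact absurd (e1.trans e3.symm) (by simp)
          | exact absurd (e2.trans e3.symm) (by simp)
    · obtain ⟨kX, rfl⟩ := (iso_adj _ _).mp haX
      obtain ⟨kY, rfl⟩ := (iso_adj _ _).mp haY
      have hkXY : kX ≠ kY := fun hh => hXY (by rw [hh])
      exact caseB hp hq hm (show (0 : Fin 2) ≠ 1 by decide) hkXY hX hY
    · exfalso
      have n1 := hsub (Sum.inl 0) (by rw [semi_adj]; exact Or.inl ⟨0, rfl⟩)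
      have n2 := hsub (Sum.inl 1) (by rw [semi_adj]; exact Or.inl ⟨1, rfl⟩)
      have n3 := hsub (Sum.inr (Sum.inr (Sum.inr ⟨0, by omega⟩)))
        (by rw [semi_adj]; exact Or.inr ⟨_, rfl⟩)
      rcases n1 with e1 | e1 <;> rcases n2 with e2 | e2 <;> rcases n3 with e3 | e3 <;>
        first
          | exact absurd (e1.trans e2.symm) (by simp)
          | exact absurd (e1.trans e3.symm) (by simp)
          | exact absurd (e2.trans e3.symm) (by simp)
    · exfalso
      have n1 := hsub (Sum.inl 0) (by rw [leaf_adj]; exact Or.inl ⟨0, rfl⟩)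
      have n2 := hsub (Sum.inl 1) (by rw [leaf_adj]; exact Or.inl ⟨1, rfl⟩)
      have n3 := hsub (Sum.inr (Sum.inr (Sum.inl 0)))
        (by rw [leaf_adj]; exact Or.inr ⟨_, rfl⟩)
      rcases n1 with e1 | e1 <;> rcases n2 with e2 | e2 <;> rcases n3 with e3 | e3 <;>
        first
          | exact absurd (e1.trans e2.symm) (by simp)
          | exact absurd (e1.trans e3.symm) (by simp)
          | exact absurd (e2.trans e3.symm) (by simp)

lemma self_contraction {V : Type*} (G : SimpleGraph V) : IsContraction G G := by
  refine ⟨fun w => {w}, ?_, ?_, ?_⟩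
  · intro w
    haveI : Nonempty ({x // x ∈ ({w} : Set V)}) := ⟨⟨w, rfl⟩⟩
    refine ⟨fun a b => ?_⟩
    have hab : a = b := Subtype.ext ((Set.mem_singleton_iff.mp a.2).trans
      (Set.mem_singleton_iff.mp b.2).symm)
    exact hab ▸ Reachable.refl a
  · intro v
    exact ⟨v, rfl, fun y hy => (Set.mem_singleton_iff.mp hy).symm⟩
  · intro w w' _
    simp

end WAux

/-- For all integers `p, q, p', q' ≥ 3`, there is a contraction model
of `W_{p,q}` in `W_{p',q'}` if and only if `p = p'` and `q = q'`. In particular, the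
graphs `W_{p,q}` for `p, q ≥ 3` form an infinite antichain of the contraction
relation. -/
theorem Wgraph_contraction_iff :
    (∀ p q p' q' : ℕ, 3 ≤ p → 3 ≤ q → 3 ≤ p' → 3 ≤ q' →
      (IsContraction (Wgraph p q) (Wgraph p' q') ↔ (p = p' ∧ q = q'))) ∧
    (∀ p q p' q' : ℕ, 3 ≤ p → 3 ≤ q → 3 ≤ p' → 3 ≤ q' → (p, q) ≠ (p', q') →
      ¬ IsContraction (Wgraph p q) (Wgraph p' q')) := by
  constructor
  · intro p q p' q' hp hq hp' hq'
    constructor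
    · exact fun h => WAux.forward hp hq h
    · rintro ⟨rfl, rfl⟩
      exact WAux.self_contraction _
  · intro p q p' q' hp hq hp' hq' hne hcon
    obtain ⟨h1, h2⟩ := WAux.forward hp hq hcon
    exact hne (by simp [h1, h2])
end

section
/- For all integers p, q, r ≥ 3, the complete bipartite graph K_{2,r} is a contraction of W_{p,q} if and only if r = p + 1. -/
open SimpleGraph

/-! ### Auxiliary material -/

namespace CWaux

abbrev Vt (p q : ℕ) := Fin 2 ⊕ (Fin p ⊕ (Fin 2 ⊕ Fin q))

/-- functions constant along edges are constant on walks -/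
lemma walk_const {V α : Type*} {G : SimpleGraph V} (f : V → α)
    (hf : ∀ a b, G.Adj a b → f a = f b) {a b : V} (w : G.Walk a b) : f a = f b := by
  induction w with
  | nil => rfl
  | cons h _ ih => exact (hf _ _ h).trans ih

lemma connected_const {V α : Type*} {G : SimpleGraph V} (hG : G.Connected) (f : V → α)
    (hf : ∀ a b, G.Adj a b → f a = f b) (a b : V) : f a = f b :=
  (hG.preconnected a b).elim fun w => walk_const f hf w

lemma connected_singleton {V : Type*} (G : SimpleGraph V) (v : V) :
    (G.induce {v}).Connected := by
  rw [connected_iff]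
  refine ⟨fun a b => ?_, ⟨⟨v, rfl⟩⟩⟩
  have : a = b := Subtype.ext (a.2.trans b.2.symm)
  rw [this]

/-- basic adjacency facts for `Wgraph` -/
lemma wadj_pole (p q : ℕ) (s : Fin 2) (x : Fin p ⊕ (Fin 2 ⊕ Fin q)) :
    (Wgraph p q).Adj (Sum.inl s) (Sum.inr x) := by simp [Wgraph]

lemma not_wadj_poles (p q : ℕ) (s s' : Fin 2) :
    ¬ (Wgraph p q).Adj (Sum.inl s) (Sum.inl s') := by simp [Wgraph]

lemma wadj_mid (p q : ℕ) (s : Fin 2) (t : Fin q) :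
    (Wgraph p q).Adj (Sum.inr (Sum.inr (Sum.inl s))) (Sum.inr (Sum.inr (Sum.inr t))) := by
  simp [Wgraph, -Fin.exists_fin_two]

lemma wadj_inr_inr {p q : ℕ} {x y : Fin p ⊕ (Fin 2 ⊕ Fin q)}
    (h : (Wgraph p q).Adj (Sum.inr x) (Sum.inr y)) :
    (∃ s t, (x = Sum.inr (Sum.inl s) ∧ y = Sum.inr (Sum.inr t)) ∨
      (y = Sum.inr (Sum.inl s) ∧ x = Sum.inr (Sum.inr t))) := by
  simp [Wgraph, -Fin.exists_fin_two] at h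
  obtain ⟨-, h⟩ := h
  rcases h with ⟨⟨s, hs⟩, ⟨t, ht⟩⟩ | ⟨⟨s, hs⟩, ⟨t, ht⟩⟩
  · exact ⟨s, t, Or.inl ⟨hs, ht⟩⟩
  · exact ⟨s, t, Or.inr ⟨hs, ht⟩⟩

/-- the `K_{2,q}` part of `Wgraph` -/
def M (p q : ℕ) : Set (Vt p q) := Set.range (fun z : Fin 2 ⊕ Fin q => Sum.inr (Sum.inr z))

lemma M_connected (p q : ℕ) (hq : 1 ≤ q) : ((Wgraph p q).induce (M p q)).Connected := by
  rw [connected_iff]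
  have hx0 : (Sum.inr (Sum.inr (Sum.inl 0)) : Vt p q) ∈ M p q := ⟨Sum.inl 0, rfl⟩
  set x0 : M p q := ⟨Sum.inr (Sum.inr (Sum.inl 0)), hx0⟩ with hx0def
  refine ⟨fun a b => ?_, ⟨x0⟩⟩
  suffices H : ∀ a : M p q, ((Wgraph p q).induce (M p q)).Reachable a x0 by
    exact (H a).trans (H b).symm
  intro ⟨v, z, hz⟩
  subst hz
  rcases z with s | t
  · rcases Fin.exists_fin_two.mp ⟨s, rfl⟩ with _
    by_cases hs : s = 0
    · subst hs; exact Reachable.refl _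
    · have hs1 : s = 1 := by omega
      subst hs1
      have hy0 : (Sum.inr (Sum.inr (Sum.inr ⟨0, by omega⟩)) : Vt p q) ∈ M p q :=
        ⟨Sum.inr ⟨0, by omega⟩, rfl⟩
      have a1 : ((Wgraph p q).induce (M p q)).Adj ⟨_, ⟨Sum.inl 1, rfl⟩⟩ ⟨_, hy0⟩ :=
        wadj_mid p q 1 ⟨0, by omega⟩
      have a2 : ((Wgraph p q).induce (M p q)).Adj ⟨_, hy0⟩ x0 :=
        (wadj_mid p q 0 ⟨0, by omega⟩).symm
      exact a1.reachable.trans a2.reachable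
  · have a3 : ((Wgraph p q).induce (M p q)).Adj ⟨_, ⟨Sum.inr t, rfl⟩⟩ x0 :=
      (wadj_mid p q 0 t).symm
    exact a3.reachable

/-- the model witnessing the forward direction -/
def fwdModel (p q : ℕ) : (Fin 2 ⊕ Fin (p+1)) → Set (Vt p q) := fun w =>
  match w with
  | Sum.inl s => {Sum.inl s}
  | Sum.inr j => if h : (j : ℕ) < p then {Sum.inr (Sum.inl ⟨j, h⟩)} else M p q

lemma fwd (p q : ℕ) (hq : 3 ≤ q) :
    IsContraction (completeBipartiteGraph (Fin 2) (Fin (p+1))) (Wgraph p q) := by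
  refine ⟨fwdModel p q, ?_, ?_, ?_⟩
  · rintro (s | j)
    · exact connected_singleton _ _
    · by_cases h : (j : ℕ) < p
      · simp only [fwdModel]
        rw [dif_pos h]
        exact connected_singleton _ _
      · simp only [fwdModel]
        rw [dif_neg h]
        exact M_connected p q (by omega)
  · rintro (s | (i | z))
    · refine ⟨Sum.inl s, rfl, ?_⟩
      rintro (s' | j) hw
      · simp only [fwdModel, Set.mem_singleton_iff] at hw
        rw [Sum.inl.injEq] at hw ⊢; exact hw.symm ▸ rfl
      · exfalso
        simp only [fwdModel] at hw
        split at hw <;> simp [M] at hw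
    · refine ⟨Sum.inr ⟨(i : ℕ), by omega⟩, ?_, ?_⟩
      · simp only [fwdModel]
        rw [dif_pos (by simpa using i.2)]
        simp
      · rintro (s' | j) hw
        · simp only [fwdModel, Set.mem_singleton_iff] at hw; exact absurd hw (by simp)
        · simp only [fwdModel] at hw
          split at hw
          · simp only [Set.mem_singleton_iff, Sum.inr.injEq, Sum.inl.injEq] at hw
            have : (j : ℕ) = (i : ℕ) := by
              have := congrArg Fin.val hw; simp at this; omega
            simp [Fin.ext_iff, this]
          · exfalso; simp [M] at hw
    · refine ⟨Sum.inr ⟨p, by omega⟩, ?_, ?_⟩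
      · simp only [fwdModel]
        rw [dif_neg (by simp)]
        exact ⟨z, rfl⟩
      · rintro (s' | j) hw
        · simp only [fwdModel, Set.mem_singleton_iff] at hw; exact absurd hw (by simp)
        · simp only [fwdModel] at hw
          split at hw
          · exfalso; simp at hw
          · next h =>
            have : (j : ℕ) = p := by omega
            simp [Fin.ext_iff, this]
  · rintro (s | j) (s' | j') hne
    · -- poles : non-adjacent, and no edges
      simp only [completeBipartiteGraph_adj, fwdModel, Set.mem_singleton_iff]
      constructor
      · rintro (⟨h1, h2⟩ | ⟨h1, h2⟩) <;> simp at h1 h2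
      · rintro ⟨a, rfl, b, rfl, hab⟩
        exact absurd hab (not_wadj_poles p q s s')
    · -- pole vs branch : adjacent, need an edge
      simp only [completeBipartiteGraph_adj]
      constructor
      · intro _
        refine ⟨Sum.inl s, rfl, ?_⟩
        simp only [fwdModel]
        by_cases h : (j' : ℕ) < p
        · rw [dif_pos h]
          exact ⟨_, rfl, wadj_pole p q s _⟩
        · rw [dif_neg h]
          exact ⟨Sum.inr (Sum.inr (Sum.inl 0)), ⟨Sum.inl 0, rfl⟩, wadj_pole p q s _⟩
      · intro _; simp
    · -- branch vs pole
      simp only [completeBipartiteGraph_adj]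
      constructor
      · intro _
        have hb : Sum.inl s' ∈ fwdModel p q (Sum.inl s') := rfl
        simp only [fwdModel]
        by_cases h : (j : ℕ) < p
        · rw [dif_pos h]
          exact ⟨_, rfl, Sum.inl s', hb, (wadj_pole p q s' _).symm⟩
        · rw [dif_neg h]
          exact ⟨Sum.inr (Sum.inr (Sum.inl 0)), ⟨Sum.inl 0, rfl⟩, Sum.inl s', hb,
            (wadj_pole p q s' _).symm⟩
      · intro _; simp
    · -- two branches : non-adjacent, no edges
      simp only [completeBipartiteGraph_adj]
      constructor
      · rintro (⟨h1, h2⟩ | ⟨h1, h2⟩) <;> simp at h1 h2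
      · rintro ⟨a, ha, b, hb, hab⟩
        exfalso
        have hjj' : j ≠ j' := fun h => hne (by rw [h])
        simp only [fwdModel] at ha hb
        by_cases h1 : (j : ℕ) < p <;> by_cases h2 : (j' : ℕ) < p
        · rw [dif_pos h1] at ha; rw [dif_pos h2] at hb
          simp only [Set.mem_singleton_iff] at ha hb
          subst ha hb
          rcases wadj_inr_inr hab with ⟨s, t, ⟨h3, _⟩ | ⟨_, h3⟩⟩ <;> simp at h3
        · rw [dif_pos h1] at ha; rw [dif_neg h2] at hb
          simp only [Set.mem_singleton_iff] at ha
          obtain ⟨z, rfl⟩ := hb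
          subst ha
          rcases wadj_inr_inr hab with ⟨s, t, ⟨h3, _⟩ | ⟨_, h3⟩⟩ <;> simp at h3
        · rw [dif_neg h1] at ha; rw [dif_pos h2] at hb
          simp only [Set.mem_singleton_iff] at hb
          obtain ⟨z, rfl⟩ := ha
          subst hb
          rcases wadj_inr_inr hab with ⟨s, t, ⟨h3, h4⟩ | ⟨h3, h4⟩⟩ <;> simp_all
        · exact hjj' (Fin.ext (by omega))


lemma fin2 (s : Fin 2) : s = 0 ∨ s = 1 := by
  rcases s with ⟨sv, hsv⟩
  interval_cases sv
  · exact Or.inl rfl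
  · exact Or.inr rfl

lemma pick3 {r : ℕ} (hr : 3 ≤ r) (C D : Fin 2 ⊕ Fin r) :
    ∃ u : Fin r, Sum.inr u ≠ C ∧ Sum.inr u ≠ D := by
  by_contra hc
  push_neg at hc
  have key : ∀ u : Fin r, Sum.inr u = C ∨ Sum.inr u = D := by
    intro u
    by_cases h : Sum.inr u = C
    · exact Or.inl h
    · exact Or.inr (hc u h)
  have i0 := key ⟨0, by omega⟩
  have i1 := key ⟨1, by omega⟩
  have i2 := key ⟨2, by omega⟩
  rcases i0 with i0 | i0 <;> rcases i1 with i1 | i1 <;> rcases i2 with i2 | i2 <;>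
    first
    | exact absurd (i0.trans i1.symm) (by simp [Fin.ext_iff])
    | exact absurd (i0.trans i2.symm) (by simp [Fin.ext_iff])
    | exact absurd (i1.trans i2.symm) (by simp [Fin.ext_iff])

/-- component label of a non-pole vertex -/
def cmp (p q : ℕ) : Vt p q → Fin p ⊕ Unit
  | Sum.inr (Sum.inl i) => Sum.inl i
  | _ => Sum.inr ()

@[simp] lemma cmp_iso (p q : ℕ) (i : Fin p) : cmp p q (Sum.inr (Sum.inl i)) = Sum.inl i := rfl
@[simp] lemma cmp_mid (p q : ℕ) (z : Fin 2 ⊕ Fin q) :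
    cmp p q (Sum.inr (Sum.inr z)) = Sum.inr () := rfl

/-- extract the middle coordinate -/
def midz (p q : ℕ) : Vt p q → Fin 2 ⊕ Fin q
  | Sum.inr (Sum.inr z) => z
  | _ => Sum.inl 0

@[simp] lemma midz_mid (p q : ℕ) (z : Fin 2 ⊕ Fin q) : midz p q (Sum.inr (Sum.inr z)) = z := rfl

lemma bwd (p q r : ℕ) (hq : 3 ≤ q) (hr : 3 ≤ r)
    (h : IsContraction (completeBipartiteGraph (Fin 2) (Fin r)) (Wgraph p q)) :
    r = p + 1 := by
  obtain ⟨φ, hconn, hpart, hadj⟩ := h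
  have hne : ∀ w, ∃ v, v ∈ φ w := by
    intro w
    obtain ⟨⟨v, hv⟩⟩ := (hconn w).nonempty
    exact ⟨v, hv⟩
  obtain ⟨A, hA, hAu⟩ := hpart (Sum.inl 0)
  obtain ⟨B, hB, hBu⟩ := hpart (Sum.inl 1)
  -- branch sets other than those of the poles consist of non-pole vertices
  have hmemAB : ∀ w v, v ∈ φ w → w ≠ A → w ≠ B → ∃ x, v = Sum.inr x := by
    intro w v hv hwA hwB
    rcases v with s | x
    · exfalso
      rcases fin2 s with rfl | rfl
      · exact hwA (hAu w hv)
      · exact hwB (hBu w hv)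
    · exact ⟨x, rfl⟩
  have hadjA : ∀ w, w ≠ A → w ≠ B →
      (completeBipartiteGraph (Fin 2) (Fin r)).Adj w A := by
    intro w hwA hwB
    obtain ⟨v, hv⟩ := hne w
    obtain ⟨x, rfl⟩ := hmemAB w v hv hwA hwB
    exact (hadj w A hwA).mpr ⟨_, hv, _, hA, (wadj_pole p q 0 x).symm⟩
  have hadjB : ∀ w, w ≠ A → w ≠ B →
      (completeBipartiteGraph (Fin 2) (Fin r)).Adj w B := by
    intro w hwA hwB
    obtain ⟨v, hv⟩ := hne w
    obtain ⟨x, rfl⟩ := hmemAB w v hv hwA hwB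
    exact (hadj w B hwB).mpr ⟨_, hv, _, hB, (wadj_pole p q 1 x).symm⟩
  have hABne : A ≠ B := by
    intro hEq
    rcases hA' : A with s | t
    · set s' : Fin 2 := if s = 0 then 1 else 0 with hs'
      have hss' : (Sum.inl s' : Fin 2 ⊕ Fin r) ≠ A := by
        rw [hA']
        rcases fin2 s with rfl | rfl <;> simp [hs']
      have := hadjA (Sum.inl s') hss' (by rw [← hEq]; exact hss')
      rw [hA'] at this
      simp at this
    · obtain ⟨u', hu1, hu2⟩ := pick3 hr A B
      have := hadjA (Sum.inr u') hu1 hu2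
      rw [hA'] at this
      simp at this
  have hAinl : ∃ s, A = Sum.inl s := by
    rcases hA' : A with s | t
    · exact ⟨s, rfl⟩
    · exfalso
      obtain ⟨u', hu1, hu2⟩ := pick3 hr A B
      have := hadjA (Sum.inr u') hu1 hu2
      rw [hA'] at this
      simp at this
  have hBinl : ∃ s, B = Sum.inl s := by
    rcases hB' : B with s | t
    · exact ⟨s, rfl⟩
    · exfalso
      obtain ⟨u', hu1, hu2⟩ := pick3 hr A B
      have := hadjB (Sum.inr u') hu1 hu2
      rw [hB'] at this
      simp at this
  obtain ⟨sA, rfl⟩ := hAinl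
  obtain ⟨sB, rfl⟩ := hBinl
  have hsAB : sA ≠ sB := fun hEq => hABne (by rw [hEq])
  -- the branch sets of the poles contain no non-pole vertex
  have hnotA : ∀ x, Sum.inr x ∉ φ (Sum.inl sA) := by
    intro x hx
    have : (completeBipartiteGraph (Fin 2) (Fin r)).Adj (Sum.inl sA) (Sum.inl sB) :=
      (hadj _ _ hABne).mpr ⟨Sum.inr x, hx, Sum.inl 1, hB, (wadj_pole p q 1 x).symm⟩
    simp at this
  have hnotB : ∀ x, Sum.inr x ∉ φ (Sum.inl sB) := by
    intro x hx
    have : (completeBipartiteGraph (Fin 2) (Fin r)).Adj (Sum.inl sB) (Sum.inl sA) :=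
      (hadj _ _ (Ne.symm hABne)).mpr ⟨Sum.inr x, hx, Sum.inl 0, hA, (wadj_pole p q 0 x).symm⟩
    simp at this
  -- owner of each non-pole vertex
  have hex : ∀ x : Fin p ⊕ (Fin 2 ⊕ Fin q), ∃ t : Fin r, Sum.inr x ∈ φ (Sum.inr t) := by
    intro x
    obtain ⟨w, hw, hwu⟩ := hpart (Sum.inr x)
    rcases w with s | t
    · exfalso
      have hs : s = sA ∨ s = sB := by
        clear hw hwu
        rcases fin2 s with rfl | rfl <;> rcases fin2 sA with rfl | rfl <;>
            rcases fin2 sB with rfl | rfl <;>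
          first
          | exact Or.inl rfl
          | exact Or.inr rfl
          | exact absurd rfl hsAB
      rcases hs with rfl | rfl
      · exact hnotA x hw
      · exact hnotB x hw
    · exact ⟨t, hw⟩
  choose u hu using hex
  have huniq : ∀ x t, Sum.inr x ∈ φ (Sum.inr t) → t = u x := by
    intro x t ht
    obtain ⟨w, hw, hwu⟩ := hpart (Sum.inr x)
    have h1 := hwu _ ht
    have h2 := hwu _ (hu x)
    exact Sum.inr.inj (h1.trans h2.symm)
  -- no edges between distinct non-pole branch sets
  have hforb : ∀ (t t' : Fin r), t ≠ t' → ∀ a ∈ φ (Sum.inr t), ∀ b ∈ φ (Sum.inr t'),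
      ¬ (Wgraph p q).Adj a b := by
    intro t t' htt a ha b hb hab
    have : (completeBipartiteGraph (Fin 2) (Fin r)).Adj (Sum.inr t) (Sum.inr t') :=
      (hadj _ _ (by simp [htt])).mpr ⟨a, ha, b, hb, hab⟩
    simp at this
  -- the component label is constant on each non-pole branch set
  have hcmp : ∀ (t : Fin r), ∀ a ∈ φ (Sum.inr t), ∀ b ∈ φ (Sum.inr t),
      cmp p q a = cmp p q b := by
    intro t a ha b hb
    refine connected_const (hconn (Sum.inr t)) (fun v => cmp p q v.1) ?_ ⟨a, ha⟩ ⟨b, hb⟩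
    rintro ⟨a', ha'⟩ ⟨b', hb'⟩ hab
    obtain ⟨x, rfl⟩ := hmemAB _ _ ha' (by simp) (by simp)
    obtain ⟨y, rfl⟩ := hmemAB _ _ hb' (by simp) (by simp)
    have hab' : (Wgraph p q).Adj (Sum.inr x) (Sum.inr y) := hab
    rcases wadj_inr_inr hab' with ⟨s', t', ⟨h1, h2⟩ | ⟨h1, h2⟩⟩ <;> subst h1 <;> subst h2 <;> rfl
  -- all vertices of the K_{2,q} part lie in a single branch set
  have hmidconst : ∀ z z' : Fin 2 ⊕ Fin q, u (Sum.inr z) = u (Sum.inr z') := by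
    intro z z'
    have hc := connected_const (M_connected p q (by omega))
      (fun v : M p q => u (Sum.inr (midz p q v.1))) ?_ ⟨_, ⟨z, rfl⟩⟩ ⟨_, ⟨z', rfl⟩⟩
    · simpa using hc
    · rintro ⟨va, za, rfl⟩ ⟨vb, zb, rfl⟩ hab
      simp only [midz_mid]
      by_contra hne'
      exact hforb _ _ hne' _ (hu (Sum.inr za)) _ (hu (Sum.inr zb)) hab
  -- counting
  have hAll : ∀ t : Fin r, (∃ i : Fin p, t = u (Sum.inl i)) ∨ t = u (Sum.inr (Sum.inl 0)) := by
    intro t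
    obtain ⟨v, hv⟩ := hne (Sum.inr t)
    obtain ⟨x, rfl⟩ := hmemAB _ _ hv (by simp) (by simp)
    rcases x with i | z
    · exact Or.inl ⟨i, huniq _ _ hv⟩
    · right
      rw [huniq _ _ hv]
      exact hmidconst z (Sum.inl 0)
  have hinj : ∀ i i' : Fin p, u (Sum.inl i) = u (Sum.inl i') → i = i' := by
    intro i i' hEq
    have h1 := hu (Sum.inl i)
    rw [hEq] at h1
    have := hcmp _ _ h1 _ (hu (Sum.inl i'))
    simpa using this
  have hnestar : ∀ i : Fin p, u (Sum.inl i) ≠ u (Sum.inr (Sum.inl 0)) := by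
    intro i hEq
    have h1 := hu (Sum.inl i)
    rw [hEq] at h1
    have := hcmp _ _ h1 _ (hu (Sum.inr (Sum.inl 0)))
    simp at this
  have hbij : Function.Bijective
      (Sum.elim (fun i : Fin p => u (Sum.inl i)) (fun _ : Unit => u (Sum.inr (Sum.inl 0)))) := by
    constructor
    · rintro (i | ⟨⟩) (i' | ⟨⟩) hEq <;> simp only [Sum.elim_inl, Sum.elim_inr] at hEq
      · rw [hinj _ _ hEq]
      · exact absurd hEq (hnestar i)
      · exact absurd hEq.symm (hnestar i')
      · rfl
    · intro t
      rcases hAll t with ⟨i, hi⟩ | hstar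
      · exact ⟨Sum.inl i, hi.symm⟩
      · exact ⟨Sum.inr (), hstar.symm⟩
  have hcard := Fintype.card_of_bijective hbij
  simp at hcard
  omega

end CWaux

/-- For all integers `p, q, r ≥ 3`, the complete bipartite graph
`K_{2,r}` is a contraction of `W_{p,q}` if and only if `r = p + 1`. -/
theorem completeBipartite_contraction_Wgraph_iff (p q r : ℕ)
    (hp : 3 ≤ p) (hq : 3 ≤ q) (hr : 3 ≤ r) :
    IsContraction (completeBipartiteGraph (Fin 2) (Fin r)) (Wgraph p q) ↔ r = p + 1 := by
  constructor
  · exact CWaux.bwd p q r hq hr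
  · rintro rfl
    exact CWaux.fwd p q hq
end

section
/- Let H and G be graphs each having a dominating vertex. Then H is a contraction of G if and only if H is an induced minor of G. -/
open SimpleGraph

/-- An induced minor model of `H` in `G`: pairwise disjoint connected branch sets (not
necessarily covering all of `G`), with distinct vertices of `H` adjacent iff the
corresponding branch sets are joined by an edge of `G`. -/
def IsInducedMinorModel {V W : Type*} (G : SimpleGraph V) (H : SimpleGraph W)
    (φ : W → Set V) : Prop :=
  (∀ w : W, (G.induce (φ w)).Connected) ∧
  (∀ w w' : W, w ≠ w' → Disjoint (φ w) (φ w')) ∧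
  ∀ w w' : W, w ≠ w' →
    (H.Adj w w' ↔ ∃ a ∈ φ w, ∃ b ∈ φ w', G.Adj a b)

/-- `H` is an induced minor of `G`: `H` can be obtained from `G` by vertex deletions and
edge contractions; equivalently, there is an induced minor model of `H` in `G`. -/
def IsInducedMinor {V W : Type*} (H : SimpleGraph W) (G : SimpleGraph V) : Prop :=
  ∃ φ : W → Set V, IsInducedMinorModel G H φ

lemma star_connected {V : Type*} (G : SimpleGraph V) (S : Set V) (v0 : V) (hv0 : v0 ∈ S)
    (h : ∀ u, u ≠ v0 → G.Adj v0 u) : (G.induce S).Connected := by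
  rw [SimpleGraph.connected_iff]
  have key : ∀ a : S, (G.induce S).Reachable ⟨v0, hv0⟩ a := by
    rintro ⟨a, ha⟩
    by_cases hav : a = v0
    · subst hav; exact SimpleGraph.Reachable.refl _
    · exact SimpleGraph.Adj.reachable (by simpa using h a hav)
  exact ⟨fun a b => (key a).symm.trans (key b), ⟨⟨v0, hv0⟩⟩⟩

/-- Let `H` and `G` be graphs each having a dominating vertex. Then
`H` is a contraction of `G` if and only if `H` is an induced minor of `G`. -/
theorem contraction_iff_inducedMinor_of_dominating
    {V W : Type*} [Fintype V] [Fintype W] (H : SimpleGraph W) (G : SimpleGraph V)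
    (hH : ∃ v : W, ∀ u : W, u ≠ v → H.Adj v u)
    (hG : ∃ v : V, ∀ u : V, u ≠ v → G.Adj v u) :
    IsContraction H G ↔ IsInducedMinor H G := by
  classical
  obtain ⟨w0, hw0⟩ := hH
  obtain ⟨v0, hv0⟩ := hG
  constructor
  · rintro ⟨φ, hconn, huniq, hadj⟩
    refine ⟨φ, hconn, fun w w' hne => ?_, hadj⟩
    rw [Set.disjoint_left]
    intro v hv hv'
    obtain ⟨w'', _, hu⟩ := huniq v
    exact hne ((hu w hv).trans (hu w' hv').symm)
  · rintro ⟨φ, hconn, hdisj, hadj⟩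
    have hne : ∀ w, (φ w).Nonempty := fun w =>
      Set.nonempty_coe_sort.mp (hconn w).nonempty
    obtain ⟨wstar, hdom, hv0mem⟩ :
        ∃ wstar : W, (∀ w, w ≠ wstar → H.Adj wstar w) ∧ ∀ w, w ≠ wstar → v0 ∉ φ w := by
      by_cases hcov : ∃ w1, v0 ∈ φ w1
      · obtain ⟨w1, hw1⟩ := hcov
        refine ⟨w1, fun w hw => ?_, fun w hw hmem => ?_⟩
        · obtain ⟨b, hb⟩ := hne w
          have hbne : b ≠ v0 := by
            intro h; subst h
            exact Set.disjoint_left.mp (hdisj w w1 hw) hb hw1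
          exact (hadj w1 w (Ne.symm hw)).mpr ⟨v0, hw1, b, hb, hv0 b hbne⟩
        · exact Set.disjoint_left.mp (hdisj w w1 hw) hmem hw1
      · push_neg at hcov
        exact ⟨w0, fun w hw => hw0 w hw, fun w _ => hcov w⟩
    set S : Set V := {v | ∀ w, w ≠ wstar → v ∉ φ w} with hS
    have hφsub : φ wstar ⊆ S := fun v hv w hw =>
      Set.disjoint_left.mp (hdisj wstar w (Ne.symm hw)) hv
    have hv0S : v0 ∈ S := hv0mem
    refine ⟨fun w => if w = wstar then S else φ w, ?_, ?_, ?_⟩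
    · intro w
      by_cases h : w = wstar
      · subst h
        show (G.induce (if w = w then S else φ w)).Connected
        rw [if_pos rfl]
        exact star_connected G S v0 hv0S hv0
      · show (G.induce (if w = wstar then S else φ w)).Connected
        rw [if_neg h]
        exact hconn w
    · intro v
      by_cases hv : ∃ w, w ≠ wstar ∧ v ∈ φ w
      · obtain ⟨w, hwne, hvw⟩ := hv
        refine ⟨w, by simp only [if_neg hwne]; exact hvw, fun w' hw' => ?_⟩
        by_cases h' : w' = wstar
        · subst h'
          simp only [if_pos rfl] at hw'
          exact absurd hvw (hw' w hwne)
        · simp only [if_neg h'] at hw'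
          by_contra hne'
          exact Set.disjoint_left.mp (hdisj w' w (fun e => hne' e)) hw' hvw
      · push_neg at hv
        refine ⟨wstar, by simp only [if_pos rfl]; exact fun w hw => hv w hw, fun w' hw' => ?_⟩
        by_contra h'
        simp only [if_neg h'] at hw'
        exact hv w' h' hw'
    · intro w w' hww'
      by_cases h : w = wstar
      · subst h
        simp only [if_pos rfl, if_neg (Ne.symm hww')]
        obtain ⟨b, hb⟩ := hne w'
        have hbne : b ≠ v0 := fun e => hv0mem w' (Ne.symm hww') (e ▸ hb)
        exact iff_of_true (hdom w' (Ne.symm hww')) ⟨v0, hv0S, b, hb, hv0 b hbne⟩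
      · simp only [if_neg h]
        by_cases h' : w' = wstar
        · subst h'
          simp only [if_pos rfl]
          obtain ⟨b, hb⟩ := hne w
          have hbne : b ≠ v0 := fun e => hv0mem w h (e ▸ hb)
          exact iff_of_true ((hdom w h).symm) ⟨b, hb, v0, hv0S, (hv0 b hbne).symm⟩
        · simp only [if_neg h']; exact hadj w w' hww'
end

section
/- For every integer i ≥ 3, the antichain 𝒲_i = {W_{i,q} : q ≥ 3} is fundamental: the class incl(𝒲_i) of all graphs G such that G ⋖ W_{i,q} for some q ≥ 3 and G is not isomorphic to W_{i,q}, is well-quasi-ordered by the contraction relation ⋖. -/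
open SimpleGraph

lemma connected_of_hub {V : Type*} {G : SimpleGraph V} (s : Set V) (x : V) (hx : x ∈ s)
    (h : ∀ y ∈ s, y ≠ x → G.Adj x y) : (G.induce s).Connected := by
  rw [connected_iff]
  refine ⟨?_, ⟨⟨x, hx⟩⟩⟩
  have step : ∀ a : s, (G.induce s).Reachable ⟨x, hx⟩ a := by
    rintro ⟨a, ha⟩
    by_cases hax : a = x
    · subst hax; rfl
    · exact SimpleGraph.Adj.reachable (by simp [induce, comap_adj]; exact h a ha hax)
  intro a b
  exact (step a).symm.trans (step b)

lemma exists_adj_of_connected {V : Type*} {G : SimpleGraph V} {s : Set V}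
    (hconn : (G.induce s).Connected)
    {a b : V} (ha : a ∈ s) (hb : b ∈ s) (hne : a ≠ b) :
    ∃ y ∈ s, G.Adj a y := by
  obtain ⟨w⟩ := hconn.preconnected ⟨a, ha⟩ ⟨b, hb⟩
  cases w with
  | nil => exact (hne rfl).elim
  | @cons _ v _ h _ => exact ⟨v.1, v.2, (by simpa [induce, comap_adj] using h)⟩

section WG
variable {p q : ℕ}

lemma w_adj_pole (j : Fin 2) (z : Fin p ⊕ (Fin 2 ⊕ Fin q)) :
    (Wgraph p q).Adj (Sum.inl j) (Sum.inr z) := by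
  simp [Wgraph, fromRel_adj]

lemma w_adj_c_l (s : Fin 2) (t : Fin q) :
    (Wgraph p q).Adj (Sum.inr (Sum.inr (Sum.inl s))) (Sum.inr (Sum.inr (Sum.inr t))) := by
  simp [Wgraph, fromRel_adj]; fin_cases s <;> simp

lemma w_adj_I_iff (u : Fin p) (y : Fin 2 ⊕ (Fin p ⊕ (Fin 2 ⊕ Fin q))) :
    (Wgraph p q).Adj (Sum.inr (Sum.inl u)) y ↔ ∃ j : Fin 2, y = Sum.inl j := by
  rcases y with j | (u' | (s | t)) <;> simp [Wgraph, fromRel_adj]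

lemma w_adj_L_iff (t : Fin q) (y : Fin 2 ⊕ (Fin p ⊕ (Fin 2 ⊕ Fin q))) :
    (Wgraph p q).Adj (Sum.inr (Sum.inr (Sum.inr t))) y ↔
      (∃ j : Fin 2, y = Sum.inl j) ∨ ∃ s : Fin 2, y = Sum.inr (Sum.inr (Sum.inl s)) := by
  rcases y with j | (u' | (s | t')) <;> simp [Wgraph, fromRel_adj] <;> fin_cases s <;> simp

end WG

def GenAdj (s k m : ℕ) (B : SimpleGraph (Fin s)) (P : Set (Fin s)) :
    (Fin s ⊕ (Fin k ⊕ Fin m)) → (Fin s ⊕ (Fin k ⊕ Fin m)) → Prop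
  | Sum.inl x, Sum.inl y => B.Adj x y
  | Sum.inl x, Sum.inr (Sum.inl _) => x ∈ P
  | Sum.inr (Sum.inl _), Sum.inl x => x ∈ P
  | Sum.inl _, Sum.inr (Sum.inr _) => True
  | Sum.inr (Sum.inr _), Sum.inl _ => True
  | _, _ => False

def Gen (s k m : ℕ) (B : SimpleGraph (Fin s)) (P : Set (Fin s)) :
    SimpleGraph (Fin s ⊕ (Fin k ⊕ Fin m)) where
  Adj := GenAdj s k m B P
  symm := ⟨by
    rintro (x | u | t) (y | u' | t') h <;>
      simp only [GenAdj] at h ⊢ <;> first | exact h.symm | exact h | trivial⟩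
  loopless := ⟨by
    rintro (x | u | t) h <;> simp only [GenAdj] at h <;> exact B.irrefl h⟩

@[simp] lemma gen_adj_ll {s k m B P} {x y : Fin s} :
    (Gen s k m B P).Adj (Sum.inl x) (Sum.inl y) ↔ B.Adj x y := Iff.rfl
@[simp] lemma gen_adj_lk {s k m B P} {x : Fin s} {u : Fin k} :
    (Gen s k m B P).Adj (Sum.inl x) (Sum.inr (Sum.inl u)) ↔ x ∈ P := Iff.rfl
@[simp] lemma gen_adj_kl {s k m B P} {x : Fin s} {u : Fin k} :
    (Gen s k m B P).Adj (Sum.inr (Sum.inl u)) (Sum.inl x) ↔ x ∈ P := Iff.rfl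
@[simp] lemma gen_adj_lm {s k m B P} {x : Fin s} {t : Fin m} :
    (Gen s k m B P).Adj (Sum.inl x) (Sum.inr (Sum.inr t)) := trivial
@[simp] lemma gen_adj_ml {s k m B P} {x : Fin s} {t : Fin m} :
    (Gen s k m B P).Adj (Sum.inr (Sum.inr t)) (Sum.inl x) := trivial
@[simp] lemma gen_not_adj_kk {s k m B P} {u u' : Fin k} :
    ¬ (Gen s k m B P).Adj (Sum.inr (Sum.inl u)) (Sum.inr (Sum.inl u')) := fun h => h
@[simp] lemma gen_not_adj_km {s k m B P} {u : Fin k} {t : Fin m} :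
    ¬ (Gen s k m B P).Adj (Sum.inr (Sum.inl u)) (Sum.inr (Sum.inr t)) := fun h => h
@[simp] lemma gen_not_adj_mk {s k m B P} {u : Fin k} {t : Fin m} :
    ¬ (Gen s k m B P).Adj (Sum.inr (Sum.inr t)) (Sum.inr (Sum.inl u)) := fun h => h
@[simp] lemma gen_not_adj_mm {s k m B P} {t t' : Fin m} :
    ¬ (Gen s k m B P).Adj (Sum.inr (Sum.inr t)) (Sum.inr (Sum.inr t')) := fun h => h

lemma classify {p q : ℕ} {V : Type*} [Fintype V] [DecidableEq V]
    {H : SimpleGraph V} {φ : V → Set (Fin 2 ⊕ (Fin p ⊕ (Fin 2 ⊕ Fin q)))}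
    (hM : IsContractionModel (Wgraph p q) H φ)
    (hniso : ¬ Nonempty (H ≃g Wgraph p q)) :
    ∃ (s k m : ℕ) (B : SimpleGraph (Fin s)) (P : Set (Fin s)),
      s ≤ 4 ∧ k ≤ p ∧ (∃ x₀ : Fin s, ∀ y, y ≠ x₀ → B.Adj x₀ y) ∧
      Nonempty (H ≃g Gen s k m B P) := by
  classical
  obtain ⟨hconn, huniq, hiff⟩ := hM
  set π : (Fin 2 ⊕ (Fin p ⊕ (Fin 2 ⊕ Fin q))) → V := fun z => (huniq z).choose with hπdef
  have hπ : ∀ z, z ∈ φ (π z) := fun z => (huniq z).choose_spec.1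
  have πeq : ∀ {z w}, z ∈ φ w → w = π z := fun {z w} h => (huniq z).choose_spec.2 w h
  have hadj : ∀ {v w x y}, v ≠ w → x ∈ φ v → y ∈ φ w → (Wgraph p q).Adj x y → H.Adj v w :=
    fun {v w x y} hne hx hy hxy => (hiff _ _ hne).mpr ⟨_, hx, _, hy, hxy⟩
  have hedge : ∀ {v w}, H.Adj v w → ∃ x ∈ φ v, ∃ y ∈ φ w, (Wgraph p q).Adj x y :=
    fun {v w} h => (hiff _ _ h.ne).mp h
  set Sfin : Finset V := {π (Sum.inl 0), π (Sum.inl 1),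
    π (Sum.inr (Sum.inr (Sum.inl 0))), π (Sum.inr (Sum.inr (Sum.inl 1)))} with hSfin
  have hmemS : ∀ w, w ∈ Sfin ↔ (w = π (Sum.inl 0) ∨ w = π (Sum.inl 1) ∨
      w = π (Sum.inr (Sum.inr (Sum.inl 0))) ∨ w = π (Sum.inr (Sum.inr (Sum.inl 1)))) := by
    intro w
    simp [hSfin]
  -- a part avoiding the four special vertices is a singleton
  have hsingle : ∀ w : V,
      (∀ z ∈ φ w, (∃ u, z = Sum.inr (Sum.inl u)) ∨ (∃ t, z = Sum.inr (Sum.inr (Sum.inr t)))) →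
      ∃ z₀, φ w = {z₀} := by
    intro w hw
    obtain ⟨⟨z₀, hz₀⟩⟩ := (hconn w).nonempty
    refine ⟨z₀, Set.eq_singleton_iff_unique_mem.mpr ⟨hz₀, ?_⟩⟩
    intro z hz
    by_contra hne
    obtain ⟨y, hy, hzy⟩ := exists_adj_of_connected (hconn w) hz hz₀ hne
    rcases hw z hz with ⟨u, rfl⟩ | ⟨t, rfl⟩
    · rcases (w_adj_I_iff u y).mp hzy with ⟨j, rfl⟩
      rcases hw _ hy with ⟨u', h⟩ | ⟨t', h⟩ <;> simp at h
    · rcases (w_adj_L_iff t y).mp hzy with ⟨j, rfl⟩ | ⟨s, rfl⟩ <;>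
        rcases hw _ hy with ⟨u', h⟩ | ⟨t', h⟩ <;> simp at h
  have hcover : ∀ w : V, w ∈ Sfin ∨ (∃ u, φ w = {Sum.inr (Sum.inl u)}) ∨
      (∃ t, φ w = {Sum.inr (Sum.inr (Sum.inr t))}) := by
    intro w
    by_cases hw : w ∈ Sfin
    · exact Or.inl hw
    · right
      have hforms : ∀ z ∈ φ w,
          (∃ u, z = Sum.inr (Sum.inl u)) ∨ (∃ t, z = Sum.inr (Sum.inr (Sum.inr t))) := by
        intro z hz
        rcases z with j | (u | (s | t))
        · exfalso
          apply hw
          rw [hmemS]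
          fin_cases j
          · exact Or.inl (πeq hz)
          · exact Or.inr (Or.inl (πeq hz))
        · exact Or.inl ⟨u, rfl⟩
        · exfalso
          apply hw
          rw [hmemS]
          fin_cases s
          · exact Or.inr (Or.inr (Or.inl (πeq hz)))
          · exact Or.inr (Or.inr (Or.inr (πeq hz)))
        · exact Or.inr ⟨t, rfl⟩
      obtain ⟨z₀, hz⟩ := hsingle w hforms
      have hz₀mem : z₀ ∈ φ w := by rw [hz]; rfl
      rcases hforms z₀ hz₀mem with ⟨u, rfl⟩ | ⟨t, rfl⟩
      · exact Or.inl ⟨u, hz⟩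
      · exact Or.inr ⟨t, hz⟩
  -- each special part contains a special vertex
  have hSmem : ∀ w ∈ Sfin, (∃ j : Fin 2, Sum.inl j ∈ φ w) ∨
      (∃ s : Fin 2, Sum.inr (Sum.inr (Sum.inl s)) ∈ φ w) := by
    intro w hw
    rw [hmemS] at hw
    rcases hw with rfl | rfl | rfl | rfl
    exacts [Or.inl ⟨0, hπ _⟩, Or.inl ⟨1, hπ _⟩, Or.inr ⟨0, hπ _⟩, Or.inr ⟨1, hπ _⟩]
  have hSK : ∀ w ∈ Sfin, ∀ u, φ w ≠ {Sum.inr (Sum.inl u)} := by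
    intro w hw u heq
    rcases hSmem w hw with ⟨j, hj⟩ | ⟨s, hs⟩
    · rw [heq] at hj; simp at hj
    · rw [heq] at hs; simp at hs
  have hSM : ∀ w ∈ Sfin, ∀ t, φ w ≠ {Sum.inr (Sum.inr (Sum.inr t))} := by
    intro w hw t heq
    rcases hSmem w hw with ⟨j, hj⟩ | ⟨s, hs⟩
    · rw [heq] at hj; simp at hj
    · rw [heq] at hs; simp at hs
  have F1 : ∀ w' ∈ Sfin, ∀ w u, φ w = {Sum.inr (Sum.inl u)} →
      (H.Adj w' w ↔ (Sum.inl 0 ∈ φ w' ∨ Sum.inl 1 ∈ φ w')) := by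
    intro w' hw' w u hφw
    constructor
    · intro h
      obtain ⟨x, hx, y, hy, hxy⟩ := hedge h
      rw [hφw] at hy
      rcases hy with rfl
      rcases (w_adj_I_iff u x).mp hxy.symm with ⟨j, rfl⟩
      fin_cases j
      · exact Or.inl hx
      · exact Or.inr hx
    · intro h
      have hne : w' ≠ w := by
        rintro rfl
        rcases h with h | h <;> · rw [hφw] at h; simp at h
      rcases h with h | h
      · exact hadj hne h (by rw [hφw]; rfl) (w_adj_pole 0 (Sum.inl u))
      · exact hadj hne h (by rw [hφw]; rfl) (w_adj_pole 1 (Sum.inl u))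
  have F2 : ∀ w' ∈ Sfin, ∀ w t, φ w = {Sum.inr (Sum.inr (Sum.inr t))} → H.Adj w' w := by
    intro w' hw' w t hφw
    have hne : w' ≠ w := fun h => hSM w' hw' t (h ▸ hφw)
    rcases hSmem w' hw' with ⟨j, hj⟩ | ⟨s, hs⟩
    · exact hadj hne hj (by rw [hφw]; rfl) (w_adj_pole j _)
    · exact hadj hne hs (by rw [hφw]; rfl) (w_adj_c_l s t)
  have F3 : ∀ w w' u u', φ w = {Sum.inr (Sum.inl u)} → φ w' = {Sum.inr (Sum.inl u')} →
      ¬ H.Adj w w' := by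
    intro w w' u u' hw hw' h
    obtain ⟨x, hx, y, hy, hxy⟩ := hedge h
    rw [hw] at hx; rw [hw'] at hy
    rcases hx with rfl; rcases hy with rfl
    rcases (w_adj_I_iff u _).mp hxy with ⟨j, hj⟩
    simp at hj
  have F4a : ∀ w w' u t, φ w = {Sum.inr (Sum.inl u)} →
      φ w' = {Sum.inr (Sum.inr (Sum.inr t))} → ¬ H.Adj w w' := by
    intro w w' u t hw hw' h
    obtain ⟨x, hx, y, hy, hxy⟩ := hedge h
    rw [hw] at hx; rw [hw'] at hy
    rcases hx with rfl; rcases hy with rfl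
    rcases (w_adj_I_iff u _).mp hxy with ⟨j, hj⟩
    simp at hj
  have F4b : ∀ w w' t t', φ w = {Sum.inr (Sum.inr (Sum.inr t))} →
      φ w' = {Sum.inr (Sum.inr (Sum.inr t'))} → ¬ H.Adj w w' := by
    intro w w' t t' hw hw' h
    obtain ⟨x, hx, y, hy, hxy⟩ := hedge h
    rw [hw] at hx; rw [hw'] at hy
    rcases hx with rfl; rcases hy with rfl
    rcases (w_adj_L_iff t _).mp hxy with ⟨j, hj⟩ | ⟨s, hs⟩
    · simp at hj
    · simp at hs
  -- there is a special part adjacent to all other special parts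
  have hdomS : ∃ ws, ws ∈ Sfin ∧ ∀ w' ∈ Sfin, w' ≠ ws → H.Adj ws w' := by
    by_cases hab : π (Sum.inl 0) = π (Sum.inl 1) ∨ H.Adj (π (Sum.inl 0)) (π (Sum.inl 1))
    · refine ⟨π (Sum.inl 0), by rw [hmemS]; exact Or.inl rfl, ?_⟩
      intro w' hw' hne
      rw [hmemS] at hw'
      rcases hw' with rfl | rfl | rfl | rfl
      · exact absurd rfl hne
      · rcases hab with heq | hAdj
        · exact absurd heq.symm hne
        · exact hAdj
      · exact hadj (Ne.symm hne) (hπ (Sum.inl 0)) (hπ _) (w_adj_pole 0 _)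
      · exact hadj (Ne.symm hne) (hπ (Sum.inl 0)) (hπ _) (w_adj_pole 0 _)
    · push_neg at hab
      obtain ⟨hne_ab, hnadj_ab⟩ := hab
      -- pole parts are singletons
      have hφa : φ (π (Sum.inl 0)) = {Sum.inl 0} := by
        refine Set.eq_singleton_iff_unique_mem.mpr ⟨hπ _, ?_⟩
        intro z hz
        rcases z with j | zz
        · fin_cases j
          · rfl
          · exact absurd (πeq hz) hne_ab
        · exact absurd (hadj hne_ab hz (hπ (Sum.inl 1)) ((w_adj_pole 1 zz).symm)) hnadj_ab
      have hφb : φ (π (Sum.inl 1)) = {Sum.inl 1} := by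
        refine Set.eq_singleton_iff_unique_mem.mpr ⟨hπ _, ?_⟩
        intro z hz
        rcases z with j | zz
        · fin_cases j
          · exact absurd (πeq hz).symm hne_ab
          · rfl
        · exact absurd (hadj (Ne.symm hne_ab) hz (hπ (Sum.inl 0)) ((w_adj_pole 0 zz).symm))
            (fun h => hnadj_ab h.symm)
      have hc0a : π (Sum.inr (Sum.inr (Sum.inl 0))) ≠ π (Sum.inl 0) := by
        intro h
        have := hπ (Sum.inr (Sum.inr (Sum.inl 0)))
        rw [h, hφa] at this
        simp at this
      have hc0b : π (Sum.inr (Sum.inr (Sum.inl 0))) ≠ π (Sum.inl 1) := by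
        intro h
        have := hπ (Sum.inr (Sum.inr (Sum.inl 0)))
        rw [h, hφb] at this
        simp at this
      have hc1a : π (Sum.inr (Sum.inr (Sum.inl 1))) ≠ π (Sum.inl 0) := by
        intro h
        have := hπ (Sum.inr (Sum.inr (Sum.inl 1)))
        rw [h, hφa] at this
        simp at this
      have hc1b : π (Sum.inr (Sum.inr (Sum.inl 1))) ≠ π (Sum.inl 1) := by
        intro h
        have := hπ (Sum.inr (Sum.inr (Sum.inl 1)))
        rw [h, hφb] at this
        simp at this
      by_cases hcc : π (Sum.inr (Sum.inr (Sum.inl 0))) = π (Sum.inr (Sum.inr (Sum.inl 1))) ∨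
          H.Adj (π (Sum.inr (Sum.inr (Sum.inl 0)))) (π (Sum.inr (Sum.inr (Sum.inl 1))))
      · refine ⟨π (Sum.inr (Sum.inr (Sum.inl 0))), by rw [hmemS]; exact Or.inr (Or.inr (Or.inl rfl)), ?_⟩
        intro w' hw' hne
        rw [hmemS] at hw'
        rcases hw' with rfl | rfl | rfl | rfl
        · exact hadj hc0a (hπ _) (hπ _) ((w_adj_pole 0 _).symm)
        · exact hadj hc0b (hπ _) (hπ _) ((w_adj_pole 1 _).symm)
        · exact absurd rfl hne
        · rcases hcc with heq | hAdj
          · exact absurd heq.symm hne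
          · exact hAdj
      · push_neg at hcc
        obtain ⟨hne_cc, hnadj_cc⟩ := hcc
        exfalso
        -- the c-parts are singletons too, hence all parts are singletons and H ≅ W
        have hφc0 : φ (π (Sum.inr (Sum.inr (Sum.inl 0)))) = {Sum.inr (Sum.inr (Sum.inl 0))} := by
          refine Set.eq_singleton_iff_unique_mem.mpr ⟨hπ _, ?_⟩
          intro z hz
          rcases z with j | (u | (s | t))
          · exfalso
            fin_cases j
            · exact hc0a (πeq hz)
            · exact hc0b (πeq hz)
          · exfalso
            obtain ⟨y, hy, hzy⟩ := exists_adj_of_connected (hconn _) hz (hπ _) (by simp)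
            rcases (w_adj_I_iff u y).mp hzy with ⟨j, rfl⟩
            fin_cases j
            · exact hc0a (πeq hy)
            · exact hc0b (πeq hy)
          · fin_cases s
            · rfl
            · exact absurd (πeq hz) hne_cc
          · exact absurd (hadj hne_cc hz (hπ _) ((w_adj_c_l 1 t).symm)) hnadj_cc
        have hφc1 : φ (π (Sum.inr (Sum.inr (Sum.inl 1)))) = {Sum.inr (Sum.inr (Sum.inl 1))} := by
          refine Set.eq_singleton_iff_unique_mem.mpr ⟨hπ _, ?_⟩
          intro z hz
          rcases z with j | (u | (s | t))
          · exfalso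
            fin_cases j
            · exact hc1a (πeq hz)
            · exact hc1b (πeq hz)
          · exfalso
            obtain ⟨y, hy, hzy⟩ := exists_adj_of_connected (hconn _) hz (hπ _) (by simp)
            rcases (w_adj_I_iff u y).mp hzy with ⟨j, rfl⟩
            fin_cases j
            · exact hc1a (πeq hy)
            · exact hc1b (πeq hy)
          · fin_cases s
            · exact absurd (πeq hz).symm hne_cc
            · rfl
          · exact absurd (hadj (Ne.symm hne_cc) hz (hπ _) ((w_adj_c_l 0 t).symm))
              (fun h => hnadj_cc h.symm)
        have hall : ∀ w : V, ∃ z, φ w = {z} := by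
          intro w
          rcases hcover w with hw | ⟨u, h⟩ | ⟨t, h⟩
          · rw [hmemS] at hw
            rcases hw with rfl | rfl | rfl | rfl
            exacts [⟨_, hφa⟩, ⟨_, hφb⟩, ⟨_, hφc0⟩, ⟨_, hφc1⟩]
          · exact ⟨_, h⟩
          · exact ⟨_, h⟩
        set ρ : V → (Fin 2 ⊕ (Fin p ⊕ (Fin 2 ⊕ Fin q))) := fun w => (hall w).choose with hρdef
        have hρ : ∀ w, φ w = {ρ w} := fun w => (hall w).choose_spec
        have hρmem : ∀ w, ρ w ∈ φ w := fun w => by rw [hρ w]; rfl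
        have hπρ : ∀ w, π (ρ w) = w := fun w => (πeq (hρmem w)).symm
        have hρπ : ∀ z, ρ (π z) = z := by
          intro z
          have h1 := hπ z
          rw [hρ (π z)] at h1
          exact h1.symm
        refine hniso ⟨⟨⟨ρ, π, hπρ, hρπ⟩, ?_⟩⟩
        intro v w
        constructor
        · intro h
          have hvw : v ≠ w := by
            rintro rfl
            exact (Wgraph p q).irrefl h
          exact hadj hvw (hρmem v) (hρmem w) h
        · intro h
          obtain ⟨x, hx, y, hy, hxy⟩ := hedge h
          rw [hρ v] at hx; rw [hρ w] at hy
          rcases hx with rfl; rcases hy with rfl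
          exact hxy
  -- the three classes of parts
  set Kset : Set V := {w | ∃ u : Fin p, φ w = {Sum.inr (Sum.inl u)}} with hKdef
  set Mset : Set V := {w | ∃ t : Fin q, φ w = {Sum.inr (Sum.inr (Sum.inr t))}} with hMdef
  haveI : Fintype ↥Kset := Fintype.ofFinite _
  haveI : Fintype ↥Mset := Fintype.ofFinite _
  set g : (↥Sfin ⊕ (↥Kset ⊕ ↥Mset)) → V :=
    Sum.elim (fun x => x.1) (Sum.elim (fun x => x.1) (fun x => x.1)) with hgdef
  have hgbij : Function.Bijective g := by
    constructor
    · rintro (x | x | x) (y | y | y) h <;> simp only [hgdef, Sum.elim_inl, Sum.elim_inr] at h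
      · exact congrArg Sum.inl (Subtype.ext h)
      · obtain ⟨u, hu⟩ := y.2
        exact absurd hu (h ▸ hSK x.1 x.2 u)
      · obtain ⟨t, ht⟩ := y.2
        exact absurd ht (h ▸ hSM x.1 x.2 t)
      · obtain ⟨u, hu⟩ := x.2
        exact absurd hu (h.symm ▸ hSK y.1 y.2 u)
      · exact congrArg (fun z => Sum.inr (Sum.inl z)) (Subtype.ext h)
      · obtain ⟨u, hu⟩ := x.2
        obtain ⟨t, ht⟩ := y.2
        rw [h, ht] at hu
        simp [Set.singleton_eq_singleton_iff] at hu
      · obtain ⟨t, ht⟩ := x.2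
        exact absurd ht (h.symm ▸ hSM y.1 y.2 t)
      · obtain ⟨u, hu⟩ := y.2
        obtain ⟨t, ht⟩ := x.2
        rw [h, hu] at ht
        simp [Set.singleton_eq_singleton_iff] at ht
      · exact congrArg (fun z => Sum.inr (Sum.inr z)) (Subtype.ext h)
    · intro w
      rcases hcover w with hw | ⟨u, h⟩ | ⟨t, h⟩
      · exact ⟨Sum.inl ⟨w, hw⟩, rfl⟩
      · exact ⟨Sum.inr (Sum.inl ⟨w, ⟨u, h⟩⟩), rfl⟩
      · exact ⟨Sum.inr (Sum.inr ⟨w, ⟨t, h⟩⟩), rfl⟩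
  set e : (Fin Sfin.card ⊕ (Fin (Fintype.card ↥Kset) ⊕ Fin (Fintype.card ↥Mset))) ≃ V :=
    (Equiv.sumCongr Sfin.equivFin.symm
      (Equiv.sumCongr (Fintype.equivFin ↥Kset).symm (Fintype.equivFin ↥Mset).symm)).trans
      (Equiv.ofBijective g hgbij) with hedef
  have he1 : ∀ x, e (Sum.inl x) ∈ Sfin := fun x => (Sfin.equivFin.symm x).2
  have he2 : ∀ u, e (Sum.inr (Sum.inl u)) ∈ Kset := fun u => ((Fintype.equivFin ↥Kset).symm u).2
  have he3 : ∀ t, e (Sum.inr (Sum.inr t)) ∈ Mset := fun t => ((Fintype.equivFin ↥Mset).symm t).2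
  set B : SimpleGraph (Fin Sfin.card) := H.comap (fun x => e (Sum.inl x)) with hBdef
  set P : Set (Fin Sfin.card) :=
    {x | Sum.inl 0 ∈ φ (e (Sum.inl x)) ∨ Sum.inl 1 ∈ φ (e (Sum.inl x))} with hPdef
  have hs4 : Sfin.card ≤ 4 := by
    have h1 := Finset.card_insert_le (π (Sum.inl 0)) ({π (Sum.inl 1),
      π (Sum.inr (Sum.inr (Sum.inl 0))), π (Sum.inr (Sum.inr (Sum.inl 1)))} : Finset V)
    have h2 := Finset.card_insert_le (π (Sum.inl 1))
      ({π (Sum.inr (Sum.inr (Sum.inl 0))), π (Sum.inr (Sum.inr (Sum.inl 1)))} : Finset V)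
    have h3 := Finset.card_insert_le (π (Sum.inr (Sum.inr (Sum.inl 0))))
      ({π (Sum.inr (Sum.inr (Sum.inl 1)))} : Finset V)
    have h4 := Finset.card_singleton (π (Sum.inr (Sum.inr (Sum.inl 1))))
    rw [hSfin]
    omega
  have hkp : Fintype.card ↥Kset ≤ p := by
    have hinj : Function.Injective (fun w : ↥Kset => (w.2.choose : Fin p)) := by
      intro w w' h
      have h1 := w.2.choose_spec
      have h2 := w'.2.choose_spec
      simp only at h
      apply Subtype.ext
      have m1 : (Sum.inr (Sum.inl w.2.choose) : Fin 2 ⊕ (Fin p ⊕ (Fin 2 ⊕ Fin q))) ∈ φ w.1 :=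
        (Set.ext_iff.mp h1 _).mpr rfl
      have m2 : (Sum.inr (Sum.inl w'.2.choose) : Fin 2 ⊕ (Fin p ⊕ (Fin 2 ⊕ Fin q))) ∈ φ w'.1 :=
        (Set.ext_iff.mp h2 _).mpr rfl
      have m1' : (Sum.inr (Sum.inl w'.2.choose) : Fin 2 ⊕ (Fin p ⊕ (Fin 2 ⊕ Fin q))) ∈ φ w.1 :=
        h ▸ m1
      exact (πeq m1').trans (πeq m2).symm
    calc Fintype.card ↥Kset ≤ Fintype.card (Fin p) := Fintype.card_le_of_injective _ hinj
      _ = p := Fintype.card_fin p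
  refine ⟨Sfin.card, Fintype.card ↥Kset, Fintype.card ↥Mset, B, P, hs4, hkp, ?_, ?_⟩
  · -- dominating vertex
    obtain ⟨ws, hwsS, hws⟩ := hdomS
    refine ⟨Sfin.equivFin ⟨ws, hwsS⟩, ?_⟩
    intro y hy
    have hey : e (Sum.inl y) ∈ Sfin := he1 y
    have hx₀ : e (Sum.inl (Sfin.equivFin ⟨ws, hwsS⟩)) = ws := by
      show (Sfin.equivFin.symm (Sfin.equivFin ⟨ws, hwsS⟩) : V) = ws
      rw [Equiv.symm_apply_apply]
    have hney : e (Sum.inl y) ≠ ws := by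
      intro h
      apply hy
      have h2 : Sfin.equivFin.symm y = ⟨ws, hwsS⟩ := Subtype.ext h
      exact (Sfin.equivFin.apply_symm_apply y).symm.trans (congrArg _ h2)
    show H.Adj (e (Sum.inl (Sfin.equivFin ⟨ws, hwsS⟩))) (e (Sum.inl y))
    rw [hx₀]
    exact hws _ hey hney
  · -- the isomorphism
    refine ⟨(SimpleGraph.Iso.symm ⟨e, ?_⟩ : H ≃g Gen Sfin.card (Fintype.card ↥Kset) (Fintype.card ↥Mset) B P)⟩
    rintro (x | u | t) (y | u' | t')
    · exact Iff.rfl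
    · obtain ⟨u₂, hu₂⟩ := he2 u'
      rw [F1 _ (he1 x) _ u₂ hu₂]
      exact Iff.rfl
    · obtain ⟨t₂, ht₂⟩ := he3 t'
      simp only [gen_adj_lm, iff_true]
      exact F2 _ (he1 x) _ t₂ ht₂
    · obtain ⟨u₂, hu₂⟩ := he2 u
      rw [SimpleGraph.adj_comm, F1 _ (he1 y) _ u₂ hu₂]
      exact Iff.rfl
    · obtain ⟨u₂, hu₂⟩ := he2 u
      obtain ⟨u₃, hu₃⟩ := he2 u'
      constructor
      · intro h
        exact absurd h (F3 _ _ u₂ u₃ hu₂ hu₃)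
      · intro h
        exact absurd h gen_not_adj_kk
    · obtain ⟨u₂, hu₂⟩ := he2 u
      obtain ⟨t₂, ht₂⟩ := he3 t'
      constructor
      · intro h
        exact absurd h (F4a _ _ u₂ t₂ hu₂ ht₂)
      · intro h
        exact absurd h (gen_not_adj_km)
    · obtain ⟨t₂, ht₂⟩ := he3 t
      simp only [gen_adj_ml, iff_true]
      exact (F2 _ (he1 y) _ t₂ ht₂).symm
    · obtain ⟨u₂, hu₂⟩ := he2 u'
      obtain ⟨t₂, ht₂⟩ := he3 t
      constructor
      · intro h
        exact absurd h.symm (F4a _ _ u₂ t₂ hu₂ ht₂)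
      · intro h
        exact absurd h (gen_not_adj_mk)
    · obtain ⟨t₂, ht₂⟩ := he3 t
      obtain ⟨t₃, ht₃⟩ := he3 t'
      constructor
      · intro h
        exact absurd h (F4b _ _ t₂ t₃ ht₂ ht₃)
      · intro h
        exact absurd h (gen_not_adj_mm)

def monoPhi (s k m m' : ℕ) (x₀ : Fin s) (hmm : m ≤ m') :
    (Fin s ⊕ (Fin k ⊕ Fin m)) → Set (Fin s ⊕ (Fin k ⊕ Fin m'))
  | Sum.inl x => {v | v = Sum.inl x ∨ (x = x₀ ∧ ∃ t : Fin m', m ≤ (t : ℕ) ∧ v = Sum.inr (Sum.inr t))}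
  | Sum.inr (Sum.inl u) => {v | v = Sum.inr (Sum.inl u)}
  | Sum.inr (Sum.inr t) => {v | v = Sum.inr (Sum.inr (Fin.castLE hmm t))}

@[simp] lemma mem_monoPhi_inl {s k m m' : ℕ} {x₀ : Fin s} {hmm : m ≤ m'} {x : Fin s}
    {v : Fin s ⊕ (Fin k ⊕ Fin m')} :
    v ∈ monoPhi s k m m' x₀ hmm (Sum.inl x) ↔
      v = Sum.inl x ∨ (x = x₀ ∧ ∃ t : Fin m', m ≤ (t : ℕ) ∧ v = Sum.inr (Sum.inr t)) := Iff.rfl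

@[simp] lemma mem_monoPhi_k {s k m m' : ℕ} {x₀ : Fin s} {hmm : m ≤ m'} {u : Fin k}
    {v : Fin s ⊕ (Fin k ⊕ Fin m')} :
    v ∈ monoPhi s k m m' x₀ hmm (Sum.inr (Sum.inl u)) ↔ v = Sum.inr (Sum.inl u) := Iff.rfl

@[simp] lemma mem_monoPhi_m {s k m m' : ℕ} {x₀ : Fin s} {hmm : m ≤ m'} {t : Fin m}
    {v : Fin s ⊕ (Fin k ⊕ Fin m')} :
    v ∈ monoPhi s k m m' x₀ hmm (Sum.inr (Sum.inr t)) ↔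
      v = Sum.inr (Sum.inr (Fin.castLE hmm t)) := Iff.rfl

lemma gen_mono {s k m m' : ℕ} {B : SimpleGraph (Fin s)} {P : Set (Fin s)}
    (x₀ : Fin s) (hx : ∀ y, y ≠ x₀ → B.Adj x₀ y) (hmm : m ≤ m') :
    IsContraction (Gen s k m B P) (Gen s k m' B P) := by
  classical
  refine ⟨monoPhi s k m m' x₀ hmm, ?_, ?_, ?_⟩
  · rintro (x | u | t)
    · refine connected_of_hub _ (Sum.inl x) (Or.inl rfl) ?_
      rintro y (rfl | ⟨rfl, t, ht, rfl⟩) hne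
      · exact (hne rfl).elim
      · exact gen_adj_lm
    · exact connected_of_hub _ (Sum.inr (Sum.inl u)) rfl
        (by rintro y rfl hne; exact (hne rfl).elim)
    · exact connected_of_hub _ (Sum.inr (Sum.inr (Fin.castLE hmm t))) rfl
        (by rintro y rfl hne; exact (hne rfl).elim)
  · rintro (x | u | t)
    · refine ⟨Sum.inl x, Or.inl rfl, ?_⟩
      rintro (y | u | t) h
      · rcases h with h | ⟨_, t, _, h⟩
        · rw [Sum.inl.inj h]
        · exact absurd h (by simp)
      · exact absurd h (by simp)
      · exact absurd h (by simp)
    · refine ⟨Sum.inr (Sum.inl u), rfl, ?_⟩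
      rintro (y | u' | t) h
      · rcases h with h | ⟨_, t, _, h⟩ <;> exact absurd h (by simp)
      · rw [Sum.inl.inj (Sum.inr.inj h)]
      · exact absurd h (by simp)
    · by_cases ht : (t : ℕ) < m
      · refine ⟨Sum.inr (Sum.inr ⟨(t : ℕ), ht⟩), by simp [Fin.ext_iff], ?_⟩
        rintro (y | u' | t') h
        · rcases h with h | ⟨_, t'', h1, h2⟩
          · exact absurd h (by simp)
          · rw [Sum.inr.inj (Sum.inr.inj h2)] at ht; omega
        · exact absurd h (by simp)
        · rw [mem_monoPhi_m] at h
          have h3 : t = Fin.castLE hmm t' := Sum.inr.inj (Sum.inr.inj h)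
          have h4 : (t : ℕ) = (t' : ℕ) := by rw [h3]; rfl
          exact congrArg _ (congrArg _ (Fin.ext h4.symm))
      · refine ⟨Sum.inl x₀, Or.inr ⟨rfl, t, by omega, rfl⟩, ?_⟩
        rintro (y | u' | t') h
        · rcases h with h | ⟨rfl, t'', h1, h2⟩
          · exact absurd h (by simp)
          · rfl
        · exact absurd h (by simp)
        · rw [mem_monoPhi_m] at h
          have h3 : t = Fin.castLE hmm t' := Sum.inr.inj (Sum.inr.inj h)
          have h4 : (t : ℕ) = (t' : ℕ) := by rw [h3]; rfl
          have h5 := t'.isLt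
          omega
  · rintro (x | u | t) (y | u' | t') hne
    · constructor
      · intro hadj
        exact ⟨Sum.inl x, Or.inl rfl, Sum.inl y, Or.inl rfl, hadj⟩
      · rintro ⟨a, (rfl | ⟨rfl, ta, hta, rfl⟩), b, (rfl | ⟨rfl, tb, htb, rfl⟩), hab⟩
        · exact hab
        · exact (hx x (by rintro rfl; exact hne rfl)).symm
        · exact hx y (by rintro rfl; exact hne rfl)
        · exact absurd rfl hne
    · constructor
      · intro hadj
        exact ⟨Sum.inl x, Or.inl rfl, Sum.inr (Sum.inl u'), rfl, hadj⟩
      · rintro ⟨a, (rfl | ⟨rfl, ta, hta, rfl⟩), b, rfl, hab⟩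
        · exact hab
        · exact absurd hab (by simp)
    · exact ⟨fun _ => ⟨Sum.inl x, Or.inl rfl, Sum.inr (Sum.inr (Fin.castLE hmm t')), rfl,
        gen_adj_lm⟩, fun _ => gen_adj_lm⟩
    · constructor
      · intro hadj
        exact ⟨Sum.inr (Sum.inl u), rfl, Sum.inl y, Or.inl rfl, hadj⟩
      · rintro ⟨a, rfl, b, (rfl | ⟨rfl, tb, htb, rfl⟩), hab⟩
        · exact hab
        · exact absurd hab (by simp)
    · constructor
      · intro hadj; exact absurd hadj (by simp)
      · rintro ⟨a, rfl, b, rfl, hab⟩; exact absurd hab (by simp)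
    · constructor
      · intro hadj; exact absurd hadj (by simp)
      · rintro ⟨a, rfl, b, rfl, hab⟩; exact absurd hab (by simp)
    · exact ⟨fun _ => ⟨Sum.inr (Sum.inr (Fin.castLE hmm t)), rfl, Sum.inl y, Or.inl rfl,
        gen_adj_ml⟩, fun _ => gen_adj_ml⟩
    · constructor
      · intro hadj; exact absurd hadj (by simp)
      · rintro ⟨a, rfl, b, rfl, hab⟩; exact absurd hab (by simp)
    · constructor
      · intro hadj; exact absurd hadj (by simp)
      · rintro ⟨a, rfl, b, rfl, hab⟩; exact absurd hab (by simp)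

/-- Pull back an induced subgraph along a graph isomorphism. -/
def inducePullbackIso {W W' : Type*} {G : SimpleGraph W} {G' : SimpleGraph W'}
    (e : G ≃g G') (S : Set W') : G.induce {w | e w ∈ S} ≃g G'.induce S where
  toEquiv := e.toEquiv.subtypeEquiv (fun _ => Iff.rfl)
  map_rel_iff' := by
    intro a b
    simp only [induce, comap_adj, Equiv.subtypeEquiv_apply]
    exact e.map_rel_iff

lemma IsContraction.congr {V V' W W' : Type*} {H : SimpleGraph V} {H' : SimpleGraph V'}
    {G : SimpleGraph W} {G' : SimpleGraph W'} (e : H ≃g H') (e' : G ≃g G')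
    (h : IsContraction H' G') : IsContraction H G := by
  obtain ⟨ψ, hconn, huniq, hadj⟩ := h
  refine ⟨fun v => {w | e' w ∈ ψ (e v)}, ?_, ?_, ?_⟩
  · intro w
    exact ((inducePullbackIso e' (ψ (e w))).connected_iff).mpr (hconn (e w))
  · intro v
    obtain ⟨w, hw, hwu⟩ := huniq (e' v)
    refine ⟨e.symm w, by simp [hw], ?_⟩
    intro y hy
    have := hwu (e y) hy
    simp [← this]
  · intro w w' hne
    have hne' : e w ≠ e w' := fun hc => hne (e.toEquiv.injective hc)
    constructor
    · intro hAdj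
      obtain ⟨a, ha, b, hb, hab⟩ := (hadj (e w) (e w') hne').mp (e.map_rel_iff.mpr hAdj)
      exact ⟨e'.symm a, by simp [ha], e'.symm b, by simp [hb], by
        have : G'.Adj (e' (e'.symm a)) (e' (e'.symm b)) := by simpa using hab
        exact e'.map_rel_iff.mp this⟩
    · rintro ⟨a, ha, b, hb, hab⟩
      exact e.map_rel_iff.mp ((hadj (e w) (e w') hne').mpr
        ⟨e' a, ha, e' b, hb, e'.map_rel_iff.mpr hab⟩)

/-- For every `i ≥ 3`, the antichain `𝒲_i = {W_{i,q} : q ≥ 3}` is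
fundamental: the class of all graphs that are a contraction of some `W_{i,q}` (`q ≥ 3`)
without being isomorphic to it is well-quasi-ordered by the contraction relation. -/
theorem Wgraph_antichain_fundamental (i : ℕ) (hi : 3 ≤ i) :
    WqoByContraction {G : FinGraph |
      ∃ q : ℕ, 3 ≤ q ∧ IsContraction G.2 (Wgraph i q) ∧
        ¬ Nonempty (G.2 ≃g Wgraph i q)} := by
  classical
  intro f hf
  have key : ∀ j : ℕ, ∃ (t : Σ s : Fin 5, SimpleGraph (Fin s.val) × Set (Fin s.val) × Fin (i+1))
      (m : ℕ), (∃ x₀ : Fin t.1.val, ∀ y, y ≠ x₀ → t.2.1.Adj x₀ y) ∧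
      Nonempty ((f j).2 ≃g Gen t.1.val t.2.2.2.val m t.2.1 t.2.2.1) := by
    intro j
    obtain ⟨q, hq3, ⟨φ, hM⟩, hniso⟩ := hf j
    obtain ⟨s, k, m, B, P, hs4, hkp, hdom, hiso⟩ := classify hM hniso
    exact ⟨⟨⟨s, by omega⟩, B, P, ⟨k, by omega⟩⟩, m, hdom, hiso⟩
  choose t mf hdom hiso using key
  obtain ⟨y, hy⟩ := Finite.exists_infinite_fiber t
  have hA : (t ⁻¹' {y}).Infinite := Set.infinite_coe_iff.mp hy
  have hne : (mf '' (t ⁻¹' {y})).Nonempty := (hA.nonempty).image _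
  obtain ⟨j₀, hj₀A, hj₀min⟩ : ∃ j₀ ∈ t ⁻¹' {y}, mf j₀ = sInf (mf '' (t ⁻¹' {y})) := by
    obtain ⟨j₀, hj₀, hj₀e⟩ := Nat.sInf_mem hne
    exact ⟨j₀, hj₀, hj₀e⟩
  obtain ⟨j₁, hj₁A, hlt⟩ := hA.exists_gt j₀
  refine ⟨j₀, j₁, hlt, ?_⟩
  have ht0 : t j₀ = y := hj₀A
  have ht1 : t j₁ = y := hj₁A
  have hmle : mf j₀ ≤ mf j₁ := by
    rw [hj₀min]
    exact Nat.sInf_le ⟨j₁, hj₁A, rfl⟩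
  have e0 := (hiso j₀).some
  have e1 := (hiso j₁).some
  have d0 := hdom j₀
  rw [ht0] at e0 d0
  rw [ht1] at e1
  obtain ⟨x₀, hx₀⟩ := d0
  show IsContraction (f j₀).2 (f j₁).2
  exact IsContraction.congr e0 e1 (gen_mono x₀ hx₀ hmle)
end
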